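/- arXiv:1310.1583 — 9 statements merged into one kernel-verified Lean document; each statement's English description precedes it below -/
import Mathlib

section
/- Let X_∞, X_1, X_2, ... be non-negative integer-valued random variables with Pr(X_∞ = k) > 0 for all k ≥ 0. If the family {X_1, X_2, ...} is tight and for every k ≥ 1 the ratio Pr(X_n = k)/Pr(X_n = k−1) converges to Pr(X_∞ = k)/Pr(X_∞ = k−1) as n → ∞, then X_n converges in distribution to X_∞. -/
open Filter

/-- Let `X_∞, X_1, X_2, …` be non-negative integer-valued random
variables (given by their probability mass functions `p n` and `q`) with
`Pr(X_∞ = k) > 0` for all `k`. If the family `{X_n}` is tight and for every `k ≥ 1` the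
ratio `Pr(X_n = k)/Pr(X_n = k−1)` converges to `Pr(X_∞ = k)/Pr(X_∞ = k−1)`, then `X_n`
converges in distribution to `X_∞`, i.e. `Pr(X_n = k) → Pr(X_∞ = k)` for every `k`. -/
theorem stmt3 (p : ℕ → ℕ → ℝ) (q : ℕ → ℝ)
    (hp0 : ∀ n k, 0 ≤ p n k) (hps : ∀ n, Summable (p n)) (hp1 : ∀ n, ∑' k, p n k = 1)
    (hq0 : ∀ k, 0 < q k) (hqs : Summable q) (hq1 : ∑' k, q k = 1)
    (tight : ∀ ε : ℝ, 0 < ε → ∃ M : ℕ, ∀ n, ∑' k : {k : ℕ // M < k}, p n (k : ℕ) ≤ ε)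
    (hratio : ∀ k : ℕ, 1 ≤ k →
      Tendsto (fun n => p n k / p n (k - 1)) atTop (nhds (q k / q (k - 1)))) :
    ∀ k : ℕ, Tendsto (fun n => p n k) atTop (nhds (q k)) := by
  have hq0' : ∀ k, q k ≠ 0 := fun k => (hq0 k).ne'
  -- eventual positivity of each p n k
  have hpos : ∀ k : ℕ, ∀ᶠ n in atTop, 0 < p n k := by
    intro k
    have hr : Tendsto (fun n => p n (k + 1) / p n k) atTop (nhds (q (k + 1) / q k)) := by
      simpa using hratio (k + 1) (by omega)
    have hlim : 0 < q (k + 1) / q k := div_pos (hq0 _) (hq0 _)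
    filter_upwards [hr.eventually_const_lt hlim] with n hn
    rcases eq_or_lt_of_le (hp0 n k) with h | h
    · rw [← h, div_zero] at hn; exact absurd hn (lt_irrefl 0)
    · exact h
  -- convergence of the ratios p n k / p n 0
  have hdiv : ∀ k : ℕ, Tendsto (fun n => p n k / p n 0) atTop (nhds (q k / q 0)) := by
    intro k
    induction k with
    | zero =>
      rw [div_self (hq0' 0)]
      apply Tendsto.congr' _ tendsto_const_nhds
      filter_upwards [hpos 0] with n hn
      exact (div_self hn.ne').symm
    | succ k ih =>
      have hr : Tendsto (fun n => p n (k + 1) / p n k) atTop (nhds (q (k + 1) / q k)) := by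
        simpa using hratio (k + 1) (by omega)
      have := hr.mul ih
      rw [div_mul_div_cancel₀ (hq0' k)] at this
      apply Tendsto.congr' _ this
      filter_upwards [hpos k] with n hn
      exact div_mul_div_cancel₀ hn.ne'
  -- partial sums of q
  set G : ℕ → ℝ := fun M => ∑ k ∈ Finset.range (M + 1), q k with hGdef
  have hGpos : ∀ M, 0 < G M := fun M =>
    Finset.sum_pos (fun k _ => hq0 k) ⟨0, Finset.mem_range.2 (by omega)⟩
  have hGle : ∀ M, G M ≤ 1 := by
    intro M
    rw [← hq1]
    exact Summable.sum_le_tsum _ (fun k _ => (hq0 k).le) hqs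
  have hGt : Tendsto G atTop (nhds 1) := by
    have h := hqs.hasSum.tendsto_sum_nat
    rw [hq1] at h
    exact h.comp (tendsto_add_atTop_nat 1)
  -- the ratio sums T and their limits
  have hT : ∀ M, Tendsto (fun n => ∑ k ∈ Finset.range (M + 1), p n k / p n 0) atTop
      (nhds (G M / q 0)) := by
    intro M
    have : G M / q 0 = ∑ k ∈ Finset.range (M + 1), q k / q 0 := Finset.sum_div _ _ _
    rw [this]
    exact tendsto_finset_sum _ (fun k _ => hdiv k)
  -- partial sums of p are ≤ 1
  have hF1 : ∀ n M, ∑ k ∈ Finset.range (M + 1), p n k ≤ 1 := by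
    intro n M
    rw [← hp1 n]
    exact Summable.sum_le_tsum _ (fun k _ => hp0 n k) (hps n)
  -- identity: partial sum = (ratio sum) * p n 0, eventually
  have hid : ∀ M, ∀ᶠ n in atTop,
      ∑ k ∈ Finset.range (M + 1), p n k
        = (∑ k ∈ Finset.range (M + 1), p n k / p n 0) * p n 0 := by
    intro M
    filter_upwards [hpos 0] with n h0
    rw [Finset.sum_mul]
    exact Finset.sum_congr rfl fun k _ => (div_mul_cancel₀ _ h0.ne').symm
  -- tail identity: partial sum = 1 - tail
  have htail : ∀ n M, ∑ k ∈ Finset.range (M + 1), p n k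
      = 1 - ∑' k : {k : ℕ // M < k}, p n (k : ℕ) := by
    intro n M
    have hsplit := Summable.sum_add_tsum_subtype_compl (hps n) (Finset.range (M + 1))
    rw [hp1 n] at hsplit
    have hiff : ∀ x : ℕ, (x ∉ Finset.range (M + 1)) ↔ M < x := by
      intro x
      simp only [Finset.mem_range]
      omega
    have h2 : ∑' x : {x : ℕ // x ∉ Finset.range (M + 1)}, p n ↑x
        = ∑' k : {k : ℕ // M < k}, p n (k : ℕ) :=
      Equiv.tsum_eq (Equiv.subtypeEquivRight hiff) (fun k : {k : ℕ // M < k} => p n (k : ℕ))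
    rw [h2] at hsplit
    linarith
  -- boundedness of p · 0
  have hbdd : IsBoundedUnder (· ≤ ·) atTop (fun n => p n 0) :=
    isBoundedUnder_of ⟨1, fun n => by simpa using hF1 n 0⟩
  have hbdd' : IsBoundedUnder (· ≥ ·) atTop (fun n => p n 0) :=
    isBoundedUnder_of ⟨0, fun n => hp0 n 0⟩
  -- key: p n 0 → q 0
  have key0 : Tendsto (fun n => p n 0) atTop (nhds (q 0)) := by
    apply tendsto_of_le_liminf_of_limsup_le _ _ hbdd hbdd'
    · -- q 0 ≤ liminf
      apply le_of_forall_pos_le_add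
      intro ε hε
      set δ : ℝ := min 1 (ε / q 0) with hδdef
      have hδ : 0 < δ := lt_min one_pos (div_pos hε (hq0 0))
      obtain ⟨M, hM⟩ := tight δ hδ
      have hSpos : 0 < G M / q 0 := div_pos (hGpos M) (hq0 0)
      -- lower bound eventually: (1 - δ)/T n ≤ p n 0
      have hle : ∀ᶠ n in atTop,
          (1 - δ) / (∑ k ∈ Finset.range (M + 1), p n k / p n 0) ≤ p n 0 := by
        filter_upwards [hid M, (hT M).eventually_const_lt (half_lt_self hSpos)] with n hidn hTn
        have hTpos : 0 < ∑ k ∈ Finset.range (M + 1), p n k / p n 0 :=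
          lt_trans (half_pos hSpos) hTn
        rw [div_le_iff₀ hTpos, mul_comm]
        have h1 : 1 - δ ≤ ∑ k ∈ Finset.range (M + 1), p n k := by
          rw [htail n M]; linarith [hM n]
        rw [hidn] at h1
        exact h1
      have hglim : Tendsto (fun n => (1 - δ) / (∑ k ∈ Finset.range (M + 1), p n k / p n 0))
          atTop (nhds ((1 - δ) / (G M / q 0))) :=
        tendsto_const_nhds.div (hT M) hSpos.ne'
      have h2 : (1 - δ) / (G M / q 0) ≤ liminf (fun n => p n 0) atTop := by
        rw [← hglim.liminf_eq]
        exact liminf_le_liminf hle hglim.isBoundedUnder_ge hbdd.isCoboundedUnder_ge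
      have h3 : q 0 - ε ≤ (1 - δ) / (G M / q 0) := by
        have hδ1 : δ ≤ 1 := min_le_left _ _
        have hδε : δ * q 0 ≤ ε := by
          have h := min_le_right 1 (ε / q 0)
          calc δ * q 0 ≤ (ε / q 0) * q 0 :=
                mul_le_mul_of_nonneg_right h (hq0 0).le
            _ = ε := div_mul_cancel₀ _ (hq0' 0)
        rw [div_div_eq_mul_div, le_div_iff₀ (hGpos M)]
        rcases le_or_gt (q 0 - ε) 0 with h | h
        · have h5 : (q 0 - ε) * G M ≤ 0 := by
            nlinarith [hGpos M, mul_nonneg (by linarith : (0:ℝ) ≤ ε - q 0) (hGpos M).le]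
          nlinarith [hq0 0]
        · have h5 : (q 0 - ε) * G M ≤ (q 0 - ε) * 1 :=
            mul_le_mul_of_nonneg_left (hGle M) h.le
          nlinarith [hq0 0]
      linarith [h2, h3]
    · -- limsup ≤ q 0
      have hlim : Tendsto (fun M => q 0 / G M) atTop (nhds (q 0)) := by
        have h := (tendsto_const_nhds (x := q 0) (f := atTop (α := ℕ))).div hGt one_ne_zero
        simpa [Pi.div_def] using h
      apply ge_of_tendsto' hlim
      intro M
      have hSpos : 0 < G M / q 0 := div_pos (hGpos M) (hq0 0)
      have hle : ∀ᶠ n in atTop,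
          p n 0 ≤ 1 / (∑ k ∈ Finset.range (M + 1), p n k / p n 0) := by
        filter_upwards [hid M, (hT M).eventually_const_lt (half_lt_self hSpos)] with n hidn hTn
        have hTpos : 0 < ∑ k ∈ Finset.range (M + 1), p n k / p n 0 :=
          lt_trans (half_pos hSpos) hTn
        rw [le_div_iff₀ hTpos, mul_comm]
        have := hF1 n M
        rw [hidn] at this
        linarith
      have hglim : Tendsto (fun n => 1 / (∑ k ∈ Finset.range (M + 1), p n k / p n 0))
          atTop (nhds (1 / (G M / q 0))) :=
        tendsto_const_nhds.div (hT M) hSpos.ne'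
      have h2 : limsup (fun n => p n 0) atTop ≤ 1 / (G M / q 0) := by
        rw [← hglim.limsup_eq]
        exact limsup_le_limsup hle hbdd'.isCoboundedUnder_le hglim.isBoundedUnder_le
      have h3 : (1 : ℝ) / (G M / q 0) = q 0 / G M := by
        rw [one_div, inv_div]
      rw [h3] at h2
      exact h2
  -- conclude for every k
  intro k
  have := (hdiv k).mul key0
  rw [div_mul_cancel₀ _ (hq0' 0)] at this
  apply Tendsto.congr' _ this
  filter_upwards [hpos 0] with n hn
  exact div_mul_cancel₀ _ hn.ne'
end

section
/- For every integer d ≥ 1, the polynomial q(μ) = μ^{2d−1}(μ²−2) − 1 has exactly one positive real root μ₀; moreover μ₀ > √2, and every other complex root of q has modulus less than √2. -/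
lemma aux_im_pow (z : ℂ) : ∀ m : ℕ, |(z ^ (m+1)).im| ≤ ((m:ℝ)+1) * |z.im| * ‖z‖ ^ m := by
  intro m
  induction m with
  | zero => simp
  | succ k ih =>
    have h1 : z ^ (k+1+1) = z^(k+1) * z := by ring
    rw [h1, Complex.mul_im]
    have habs : |(z^(k+1)).re| ≤ ‖z‖ ^ (k+1) := by
      simpa [norm_pow] using Complex.abs_re_le_norm (z^(k+1))
    have hzre : |z.re| ≤ ‖z‖ := Complex.abs_re_le_norm z
    calc |(z^(k+1)).re * z.im + (z^(k+1)).im * z.re|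
        ≤ |(z^(k+1)).re * z.im| + |(z^(k+1)).im * z.re| := abs_add_le _ _
      _ = |(z^(k+1)).re| * |z.im| + |(z^(k+1)).im| * |z.re| := by rw [abs_mul, abs_mul]
      _ ≤ ‖z‖ ^ (k+1) * |z.im| + (((k:ℝ)+1) * |z.im| * ‖z‖ ^ k) * ‖z‖ := by
          refine add_le_add (mul_le_mul_of_nonneg_right habs (abs_nonneg _)) ?_
          exact mul_le_mul ih hzre (abs_nonneg _) (by positivity)
      _ = (((k+1:ℕ):ℝ)+1) * |z.im| * ‖z‖ ^ (k+1) := by push_cast; ring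
  
lemma aux_nsq : ∀ k : ℕ, k^2 < 2^(k+3) := by
  intro k
  induction k with
  | zero => norm_num
  | succ j ih =>
    have h1 : j < 2^j := Nat.lt_two_pow_self
    have h2 : 2*j + 1 < 2^(j+3) := by
      calc 2*j + 1 < 2*2^j + 1 := by omega
        _ ≤ 2^(j+3) := by
            have : (1:ℕ) ≤ 2^j := Nat.one_le_two_pow
            calc 2*2^j + 1 ≤ 2*2^j + 2^j := by omega
              _ ≤ 8 * 2^j := by omega
              _ = 2^(j+3) := by ring
    calc (j+1)^2 = j^2 + (2*j+1) := by ring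
      _ < 2^(j+3) + 2^(j+3) := by omega
      _ = 2^(j+1+3) := by ring

set_option maxHeartbeats 1000000 in
/-- For every integer `d ≥ 1`, the polynomial
`q(μ) = μ^(2d−1)(μ²−2) − 1` has exactly one positive real root `μ₀`; moreover
`μ₀ > √2`, and every other complex root of `q` has modulus less than `√2`. -/
theorem stmt4 (d : ℕ) (hd : 1 ≤ d) :
    ∃ μ₀ : ℝ, Real.sqrt 2 < μ₀ ∧
      μ₀ ^ (2 * d - 1) * (μ₀ ^ 2 - 2) - 1 = 0 ∧
      (∀ x : ℝ, 0 < x → x ^ (2 * d - 1) * (x ^ 2 - 2) - 1 = 0 → x = μ₀) ∧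
      (∀ z : ℂ, z ^ (2 * d - 1) * (z ^ 2 - 2) - 1 = 0 →
        z = (μ₀ : ℂ) ∨ ‖z‖ < Real.sqrt 2) := by
  obtain ⟨m, hm⟩ : ∃ m, 2 * d - 1 = m + 1 := ⟨2*d - 2, by omega⟩
  set n : ℕ := 2 * d - 1 with hndef
  have hmodd : Odd n := ⟨d - 1, by omega⟩
  have hs2 : (Real.sqrt 2) ^ 2 = 2 := Real.sq_sqrt (by norm_num)
  have hsnn : (0:ℝ) ≤ Real.sqrt 2 := Real.sqrt_nonneg 2
  have hspos : (0:ℝ) < Real.sqrt 2 := Real.sqrt_pos.mpr (by norm_num)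
  have hs1 : (1:ℝ) < Real.sqrt 2 := by nlinarith
  have hslt2 : Real.sqrt 2 < 2 := by nlinarith
  -- existence of μ₀ by IVT
  have hcont : ContinuousOn (fun x : ℝ => x ^ n * (x ^ 2 - 2) - 1) (Set.Icc (Real.sqrt 2) 2) := by
    fun_prop
  have hiv := intermediate_value_Icc hslt2.le hcont
  have hmem : (0:ℝ) ∈ Set.Icc ((Real.sqrt 2) ^ n * ((Real.sqrt 2) ^ 2 - 2) - 1)
      ((2:ℝ) ^ n * ((2:ℝ) ^ 2 - 2) - 1) := by
    constructor
    · rw [hs2]; norm_num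
    · have : (2:ℝ) ≤ 2 ^ n := by
        calc (2:ℝ) = 2^1 := by norm_num
          _ ≤ 2^n := by apply pow_le_pow_right₀ (by norm_num); omega
      nlinarith
  obtain ⟨μ₀, hμmem, hμeq⟩ := hiv hmem
  have hμlb : Real.sqrt 2 ≤ μ₀ := hμmem.1
  have hμroot : μ₀ ^ n * (μ₀ ^ 2 - 2) - 1 = 0 := hμeq
  have hμne : Real.sqrt 2 < μ₀ := by
    rcases eq_or_lt_of_le hμlb with h | h
    · exfalso; rw [← h, hs2] at hμroot; simp at hμroot
    · exact h
  -- strict monotonicity beyond √2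
  have key : ∀ a b : ℝ, Real.sqrt 2 ≤ a → a < b → a^n * (a^2-2) < b^n * (b^2-2) := by
    intro a b ha hab
    have ha0 : 0 ≤ a := le_trans hsnn ha
    have hb0 : 0 < b := lt_of_le_of_lt ha0 hab
    have h1 : a^n ≤ b^n := pow_le_pow_left₀ ha0 hab.le n
    have h2 : 0 ≤ a^2 - 2 := by nlinarith
    have h3 : (0:ℝ) < b^n := pow_pos hb0 n
    have h4 : a^n * (a^2-2) ≤ b^n * (a^2-2) := mul_le_mul_of_nonneg_right h1 h2
    have h5 : b^n * (a^2-2) < b^n * (b^2-2) := by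
      apply mul_lt_mul_of_pos_left _ h3
      nlinarith
    linarith
  -- uniqueness among positive reals
  have uniq : ∀ x : ℝ, 0 < x → x ^ n * (x ^ 2 - 2) - 1 = 0 → x = μ₀ := by
    intro x hx hxeq
    have hxge : Real.sqrt 2 ≤ x := by
      by_contra hcon
      push_neg at hcon
      have hx2 : x^2 ≤ 2 := by nlinarith
      have hxn : (0:ℝ) < x^n := pow_pos hx n
      nlinarith
    rcases lt_trichotomy x μ₀ with h | h | h
    · exfalso; have := key x μ₀ hxge h; nlinarith
    · exact h
    · exfalso; have := key μ₀ x (le_of_lt hμne) h; nlinarith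
  refine ⟨μ₀, hμne, hμroot, uniq, ?_⟩
  -- complex part
  intro z hz
  by_cases habs : ‖z‖ < Real.sqrt 2
  · exact Or.inr habs
  push_neg at habs
  left
  set t : ℝ := ‖z‖ with htdef
  have htpos : 0 < t := lt_of_lt_of_le hspos habs
  have hzne : z ≠ 0 := by
    intro h
    rw [htdef, h, norm_zero] at htpos
    exact lt_irrefl _ htpos
  have hz1 : z ^ n * (z ^ 2 - 2) = 1 := by linear_combination hz
  -- |z^2 - 2| = 1 / t^n ≤ 1/√2
  have htn : Real.sqrt 2 ≤ t ^ n := by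
    calc Real.sqrt 2 = (Real.sqrt 2)^1 := by ring
      _ ≤ (Real.sqrt 2)^n := by apply pow_le_pow_right₀ hs1.le; omega
      _ ≤ t^n := pow_le_pow_left₀ hsnn habs n
  have habsmul : t ^ n * ‖z ^ 2 - 2‖ = 1 := by
    have := congrArg (‖·‖) hz1
    rwa [norm_mul, norm_pow, norm_one] at this
  have habs2 : ‖z ^ 2 - 2‖ ≤ 1 / Real.sqrt 2 := by
    have htnpos : 0 < t^n := pow_pos htpos n
    rw [le_div_iff₀ hspos]
    nlinarith [norm_nonneg (z^2-2)]
  have hre2 : 1 < (z ^ 2).re := by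
    have h1 : |(z^2 - 2).re| ≤ ‖z^2 - 2‖ := Complex.abs_re_le_norm _
    have h2 : (z^2 - 2).re = (z^2).re - 2 := by simp
    have h3 : 1 / Real.sqrt 2 < 1 := by rw [div_lt_one hspos]; exact hs1
    rw [h2] at h1
    have := abs_le.mp h1
    linarith
  have hzre1 : 1 < |z.re| := by
    have h1 : (z^2).re = z.re * z.re - z.im * z.im := by
      rw [pow_two, Complex.mul_re]
    nlinarith [sq_abs z.re, abs_nonneg z.re, mul_self_nonneg z.im]
  -- show z.im = 0
  have him0 : z.im = 0 := by
    by_contra him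
    have himpos : 0 < |z.im| := abs_pos.mpr him
    -- z^2 - 2 = (z^n)⁻¹
    have hinv : z ^ 2 - 2 = (z ^ n)⁻¹ := by
      field_simp
      linear_combination hz1
    have hnormSq : Complex.normSq (z ^ n) = (t ^ n) ^ 2 := by
      rw [Complex.normSq_eq_norm_sq, norm_pow]
    have him_eq : (z ^ 2).im = -(z ^ n).im / (t ^ n) ^ 2 := by
      have : (z^2 - 2).im = (z^2).im := by simp
      rw [← this, hinv, Complex.inv_im, hnormSq]
    have himzn : |(z ^ n).im| ≤ ((m:ℝ)+1) * |z.im| * t ^ m := by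
      rw [hm]; exact aux_im_pow z m
    have him2 : |(z ^ 2).im| = 2 * |z.re| * |z.im| := by
      rw [pow_two, Complex.mul_im, show z.re * z.im + z.im * z.re = 2 * (z.re * z.im) by ring,
        abs_mul, abs_mul, abs_two]
      ring
    have hbound : 2 * |z.re| * |z.im| * (t ^ n) ^ 2 ≤ ((m:ℝ)+1) * |z.im| * t ^ m := by
      have h1 : |(z ^ 2).im| * (t ^ n) ^ 2 ≤ |(z ^ n).im| := by
        rw [him_eq, abs_div, abs_neg, abs_pow, abs_pow, abs_of_pos htpos,
          div_mul_cancel₀]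
        positivity
      rw [him2] at h1
      exact le_trans h1 himzn
    -- derive 2 * t^(m+2) < m + 1
    have htm : 0 < t ^ m := pow_pos htpos m
    have hstep : 2 * t ^ (m+2) < (m:ℝ) + 1 := by
      have hn2 : (t ^ n)^2 = t^m * t^m * t * t := by
        rw [hm]; ring
      rw [hn2] at hbound
      have hXpos : (0:ℝ) < t^m * t^m * t * t := by positivity
      have hC : (2 * (t^m * t^m * t * t)) * |z.im| < (((m:ℝ)+1) * t^m) * |z.im| := by
        nlinarith [hbound, mul_pos himpos hXpos]
      have h2 : 2 * (t^m * t^m * t * t) < ((m:ℝ)+1) * t^m :=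
        lt_of_mul_lt_mul_right hC (abs_nonneg _)
      have h3 : 2 * (t^m * t * t) < (m:ℝ)+1 := by
        have h4 : (2 * (t^m * t * t)) * t^m < (((m:ℝ)+1)) * t^m := by
          calc (2 * (t^m * t * t)) * t^m = 2 * (t^m * t^m * t * t) := by ring
            _ < ((m:ℝ)+1) * t^m := h2
        exact lt_of_mul_lt_mul_right h4 htm.le
      calc 2 * t^(m+2) = 2 * (t^m * t * t) := by ring
        _ < (m:ℝ)+1 := h3
    -- but 2 * t^(m+2) ≥ 2 * (√2)^(m+2) and (2(√2)^(m+2))^2 = 2^(m+4) > (m+1)^2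
    have hsle : (Real.sqrt 2)^(m+2) ≤ t^(m+2) := pow_le_pow_left₀ hsnn habs _
    have hsq : ((Real.sqrt 2)^(m+2))^2 = 2^(m+2) := by
      rw [← pow_mul, mul_comm, pow_mul, hs2]
    have hnat : ((m:ℝ)+1)^2 < 2^(m+4) := by
      have h := aux_nsq (m+1)
      have hcast : (((m+1)^2:ℕ):ℝ) < ((2^(m+4):ℕ):ℝ) := by
        exact_mod_cast h
      push_cast at hcast
      linarith
    have hpow_pos : (0:ℝ) < (Real.sqrt 2)^(m+2) := pow_pos hspos _
    have hab : 2 * Real.sqrt 2 ^ (m+2) < (m:ℝ)+1 := by linarith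
    have hsq2 := mul_self_lt_mul_self (by positivity : (0:ℝ) ≤ 2 * Real.sqrt 2 ^ (m+2)) hab
    have h24 : (2:ℝ)^(m+4) = 2^(m+2) * 4 := by rw [pow_add, pow_add]; ring
    nlinarith [hsq, hsq2, hnat, h24]
  -- real case
  have hzreal : z = (z.re : ℂ) := Complex.ext rfl (by simp [him0])
  set x : ℝ := z.re with hxdef
  have htx : t = |x| := by rw [htdef, hzreal, Complex.norm_real, Real.norm_eq_abs]
  have hxeq : x ^ n * (x ^ 2 - 2) - 1 = 0 := by
    have : ((x:ℂ)) ^ n * ((x:ℂ) ^ 2 - 2) - 1 = 0 := by rw [← hzreal]; exact hz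
    exact_mod_cast this
  have hxpos : 0 < x := by
    rcases lt_trichotomy x 0 with h | h | h
    · exfalso
      have hxn : x ^ n < 0 := Odd.pow_neg hmodd h
      have hx2 : 2 ≤ x^2 := by
        have : Real.sqrt 2 ≤ |x| := by rw [← htx]; exact habs
        nlinarith [sq_abs x]
      nlinarith
    · exfalso; rw [htx, h] at htpos; simp at htpos
    · exact h
  rw [hzreal, uniq x hxpos hxeq]
end

section
/- Let f be uniformly distributed on Hom(P_{n,d},0). Then Pr(|Rng(f)| < 3) ≤ 2^{1−n/2}. -/
/-- `f : {0,…,n} → ℤ` is a graph homomorphism from `P_{n,d}` to `ℤ` sending `0` to `0`: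
`f 0 = 0` and `|f i − f j| = 1` whenever `|i − j| ∈ {1,3,…,2d+1}`. -/
def PHom (n d : ℕ) (f : Fin (n + 1) → ℤ) : Prop :=
  f 0 = 0 ∧ ∀ i j : Fin (n + 1),
    (∃ k, k ≤ d ∧ |((i : ℕ) : ℤ) - ((j : ℕ) : ℤ)| = 2 * k + 1) → |f i - f j| = 1



lemma phom_step {n d : ℕ} {f : Fin (n+1) → ℤ} (hf : PHom n d f)
    {i j : Fin (n+1)} (hij : (j:ℕ) = (i:ℕ) + 1) : |f j - f i| = 1 := by
  refine hf.2 j i ⟨0, Nat.zero_le d, ?_⟩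
  have : ((j:ℕ):ℤ) = ((i:ℕ):ℤ) + 1 := by exact_mod_cast congrArg (Nat.cast : ℕ → ℤ) hij
  rw [this]; simp

lemma phom_bound {n d : ℕ} {f : Fin (n+1) → ℤ} (hf : PHom n d f) :
    ∀ i : Fin (n+1), |f i| ≤ (i : ℕ) := by
  intro i
  induction i using Fin.induction with
  | zero => simp [hf.1]
  | succ i ih =>
    have h1 : |f i.succ - f i.castSucc| = 1 := phom_step hf (by simp)
    have h2 := abs_sub_abs_le_abs_sub (f i.succ) (f i.castSucc)
    simp only [Fin.val_succ, Fin.coe_castSucc] at *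
    push_cast
    linarith

lemma phom_finite (n d : ℕ) : {f : Fin (n+1) → ℤ | PHom n d f}.Finite := by
  apply Set.Finite.subset (Set.Finite.pi (fun _ : Fin (n+1) => Set.finite_Icc (-(n:ℤ)) n))
  intro f hf
  rw [Set.mem_univ_pi]
  intro i
  have h := phom_bound hf i
  have hi : ((i:ℕ):ℤ) ≤ (n:ℤ) := by exact_mod_cast Nat.le_of_lt_succ i.isLt
  have := abs_le.mp (le_trans h hi)
  exact Set.mem_Icc.mpr this

def enc (n : ℕ) (s : Fin ((n+1)/2) → Bool) : Fin (n+1) → ℤ :=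
  fun i => if h : (i:ℕ) % 2 = 0 then 0
    else (if s ⟨(i:ℕ)/2, by have := i.isLt; omega⟩ then 1 else -1)

lemma enc_mem (n d : ℕ) (s : Fin ((n+1)/2) → Bool) : PHom n d (enc n s) := by
  constructor
  · simp [enc]
  · rintro i j ⟨k, -, hk⟩
    have hpar : (i:ℕ) % 2 ≠ (j:ℕ) % 2 := by
      rcases (abs_eq (by positivity)).mp hk with h | h <;> omega
    unfold enc
    rcases Nat.mod_two_eq_zero_or_one (i:ℕ) with hi | hi <;>
      rcases Nat.mod_two_eq_zero_or_one (j:ℕ) with hj | hj <;>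
        simp only [hi, hj] at hpar ⊢ <;> first
    | omega
    | (norm_num <;> split <;> norm_num)
    | (norm_num <;> split <;> split <;> norm_num)

lemma enc_inj (n : ℕ) : Function.Injective (enc n) := by
  intro s t hst
  funext k
  have hk : 2 * (k:ℕ) + 1 < n + 1 := by have := k.isLt; omega
  have := congrFun hst ⟨2 * (k:ℕ) + 1, hk⟩
  simp only [enc] at this
  have h2 : (2 * (k:ℕ) + 1) % 2 = 1 := by omega
  have h3 : (2 * (k:ℕ) + 1) / 2 = (k:ℕ) := by omega
  simp only [h2, h3] at this
  norm_num at this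
  try simp only [Fin.eta] at this
  cases hs : s k <;> cases ht : t k <;> simp [hs, ht] at this <;> rfl

lemma den_lb (n d : ℕ) : 2 ^ ((n+1)/2) ≤ {f : Fin (n+1) → ℤ | PHom n d f}.ncard := by
  have hsub : Set.range (enc n) ⊆ {f : Fin (n+1) → ℤ | PHom n d f} := by
    rintro f ⟨s, rfl⟩; exact enc_mem n d s
  have h1 : (Set.range (enc n)).ncard = 2 ^ ((n+1)/2) := by
    rw [← Nat.card_coe_set_eq, Nat.card_range_of_injective (enc_inj n)]
    simp [Nat.card_eq_fintype_card]
  calc 2 ^ ((n+1)/2) = (Set.range (enc n)).ncard := h1.symm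
    _ ≤ _ := Set.ncard_le_ncard hsub (phom_finite n d)

lemma num_sub (n d : ℕ) (hn : 0 < n) :
    {f : Fin (n+1) → ℤ | PHom n d f ∧ (Set.range f).ncard < 3} ⊆
      {(fun i : Fin (n+1) => if (i:ℕ) % 2 = 0 then 0 else (1:ℤ)),
       (fun i : Fin (n+1) => if (i:ℕ) % 2 = 0 then 0 else (-1:ℤ))} := by
  rintro f ⟨hf, hr⟩
  set one : Fin (n+1) := ⟨1, by omega⟩ with hone
  set c := f one with hc
  have hc1 : |c| = 1 := by
    have := phom_step hf (i := 0) (j := one) (by simp [hone])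
    simpa [hf.1] using this
  have hcne : c ≠ 0 := by rintro h; rw [h] at hc1; simp at hc1
  have hpair : ({0, c} : Set ℤ) ⊆ Set.range f := by
    rintro x hx
    rcases hx with rfl | hx
    · exact ⟨0, hf.1⟩
    · rw [Set.mem_singleton_iff] at hx; exact hx ▸ ⟨one, rfl⟩
  have hrange : ({0, c} : Set ℤ) = Set.range f := by
    apply Set.eq_of_subset_of_ncard_le hpair ?_ (Set.finite_range f)
    rw [Set.ncard_pair (Ne.symm hcne)]
    omega
  have key : ∀ i : Fin (n+1), f i = if (i:ℕ) % 2 = 0 then 0 else c := by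
    intro i
    induction i using Fin.induction with
    | zero => simpa using hf.1
    | succ i ih =>
      have h1 : |f i.succ - f i.castSucc| = 1 := phom_step hf (by simp)
      have h2 : f i.succ = 0 ∨ f i.succ = c := by
        have : f i.succ ∈ ({0, c} : Set ℤ) := hrange ▸ Set.mem_range_self _
        simpa using this
      simp only [Fin.coe_castSucc] at ih
      simp only [Fin.val_succ]
      rcases Nat.mod_two_eq_zero_or_one (i:ℕ) with hi | hi
      · have hsucc : ((i:ℕ)+1) % 2 = 1 := by omega
        simp only [hi, if_pos rfl] at ih
        simp only [hsucc]; norm_num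
        rcases h2 with h2 | h2
        · exfalso; rw [ih, h2] at h1; simp at h1
        · exact h2
      · have hsucc : ((i:ℕ)+1) % 2 = 0 := by omega
        simp only [hi] at ih; norm_num at ih
        simp only [hsucc, if_pos rfl]
        rcases h2 with h2 | h2
        · exact h2
        · exfalso; rw [ih, h2] at h1; simp at h1
  rcases (abs_eq (by norm_num : (0:ℤ) ≤ 1)).mp hc1 with h | h
  · left; funext i; rw [key i, h]
  · right
    rw [Set.mem_singleton_iff]
    funext i; rw [key i, h]

/-- If `f` is uniformly distributed on `Hom(P_{n,d},0)` then
`Pr(|Rng f| < 3) ≤ 2^(1−n/2)`. -/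
theorem stmt8 (n d : ℕ) (hn : 0 < n) (hd : 0 < d) :
    (Set.ncard {f : Fin (n + 1) → ℤ | PHom n d f ∧ (Set.range f).ncard < 3} : ℝ) /
      (Set.ncard {f : Fin (n + 1) → ℤ | PHom n d f} : ℝ) ≤
        (2 : ℝ) ^ (1 - (n : ℝ) / 2) := by
  have hnum : (Set.ncard {f : Fin (n + 1) → ℤ | PHom n d f ∧ (Set.range f).ncard < 3} : ℝ)
      ≤ 2 := by
    have h1 := Set.ncard_le_ncard (num_sub n d hn)
      (Set.Finite.insert _ (Set.finite_singleton _))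
    have h2 : ({(fun i : Fin (n+1) => if (i:ℕ) % 2 = 0 then 0 else (1:ℤ)),
        (fun i : Fin (n+1) => if (i:ℕ) % 2 = 0 then 0 else (-1:ℤ))} : Set (Fin (n+1) → ℤ)).ncard ≤ 2 :=
      le_trans (Set.ncard_insert_le _ _) (by simp)
    exact_mod_cast le_trans h1 h2
  set m := (n+1)/2 with hmdef
  have hden : (2:ℝ)^m ≤ (Set.ncard {f : Fin (n + 1) → ℤ | PHom n d f} : ℝ) := by
    exact_mod_cast den_lb n d
  have hm : (n:ℝ)/2 ≤ (m:ℝ) := by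
    have h : n ≤ 2 * m := by omega
    have := (Nat.cast_le (α := ℝ)).mpr h
    push_cast at this; linarith
  have hpos : (0:ℝ) < 2^m := by positivity
  calc _ ≤ (2:ℝ) / 2^m := div_le_div₀ (by norm_num) hnum hpos hden
    _ = (2:ℝ) ^ (1 - (m:ℝ)) := by
        rw [Real.rpow_sub (by norm_num), Real.rpow_one, Real.rpow_natCast]
    _ ≤ (2:ℝ) ^ (1 - (n:ℝ)/2) := by
        apply Real.rpow_le_rpow_of_exponent_le (by norm_num)
        linarith
end

section
/- Let n be even, let T_{n,d} be the graph on vertices {0,...,n−1} with edges between i and j whenever min{|i−j|, n−|i−j|} ∈ {1,3,...,2d+1}, and let f be uniformly distributed on Hom(T_{n,d},0). Then Pr(|Rng(f)| < 3) ≤ 2^{1−n/2}. -/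
/-- `f : {0,…,n−1} → ℤ` is a graph homomorphism from the torus graph `T_{n,d}` to `ℤ`
sending `0` to `0`: `f 0 = 0` and `|f x − f y| = 1` whenever
`min{|x−y|, n−|x−y|} ∈ {1,3,…,2d+1}`. -/
def THom (n d : ℕ) (f : Fin n → ℤ) : Prop :=
  (∀ x : Fin n, (x : ℕ) = 0 → f x = 0) ∧
  ∀ x y : Fin n,
    (Odd (min (((x : ℕ) : ℤ) - ((y : ℕ) : ℤ)).natAbs
        (n - (((x : ℕ) : ℤ) - ((y : ℕ) : ℤ)).natAbs)) ∧
     min (((x : ℕ) : ℤ) - ((y : ℕ) : ℤ)).natAbs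
        (n - (((x : ℕ) : ℤ) - ((y : ℕ) : ℤ)).natAbs) ≤ 2 * d + 1) →
    |f x - f y| = 1

lemma abs_eq_one_cases {z : ℤ} (hz : |z| = 1) : z = 1 ∨ z = -1 := by
  rcases abs_cases z with ⟨h, _⟩ | ⟨h, _⟩ <;> rw [h] at hz <;> omega

lemma thom_adj {n d : ℕ} {f : Fin n → ℤ} (hf : THom n d f) (hn2 : 2 ≤ n)
    (k : ℕ) (hk : k + 1 < n) (hk' : k < n) :
    |f ⟨k + 1, hk⟩ - f ⟨k, hk'⟩| = 1 := by
  apply hf.2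
  have h1 : ((((⟨k + 1, hk⟩ : Fin n) : ℕ) : ℤ) - (((⟨k, hk'⟩ : Fin n) : ℕ) : ℤ)).natAbs = 1 := by
    simp only [Fin.val_mk]
    omega
  rw [h1, min_eq_left (by omega)]
  exact ⟨odd_one, by omega⟩

/-- parity: `f x ≡ x (mod 2)` for a homomorphism. -/
lemma thom_parity {n d : ℕ} {f : Fin n → ℤ} (hf : THom n d f) (hn2 : 2 ≤ n) :
    ∀ k (hk : k < n), Even (f ⟨k, hk⟩ - (k : ℤ)) := by
  intro k
  induction k with
  | zero =>
    intro hk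
    rw [hf.1 ⟨0, hk⟩ rfl]
    simp
  | succ k ih =>
    intro hk
    have hk' : k < n := by omega
    have h1 := thom_adj hf hn2 k hk hk'
    have h2 := ih hk'
    have h3 := abs_eq_one_cases h1
    rw [Int.even_iff] at h2 ⊢
    push_cast
    omega

/-- Let `n` be even and `f` uniformly distributed on `Hom(T_{n,d},0)`.
Then `Pr(|Rng f| < 3) ≤ 2^(1−n/2)`. -/
theorem stmt9 (n d : ℕ) (hn : 0 < n) (hne : Even n) (hd : 0 < d) :
    (Set.ncard {f : Fin n → ℤ | THom n d f ∧ (Set.range f).ncard < 3} : ℝ) /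
      (Set.ncard {f : Fin n → ℤ | THom n d f} : ℝ) ≤ (2 : ℝ) ^ (1 - (n : ℝ) / 2) := by
  classical
  obtain ⟨m, hm⟩ : ∃ m, n = 2 * m := by
    obtain ⟨k, hk⟩ := hne; exact ⟨k, by omega⟩
  have hm1 : 1 ≤ m := by omega
  have hn2 : 2 ≤ n := by omega
  have hrpow : (2 : ℝ) ^ (1 - (n : ℝ) / 2) = 2 / 2 ^ m := by
    have h1 : (1 - (n : ℝ) / 2) = ((1 - (m : ℤ) : ℤ) : ℝ) := by
      push_cast
      rw [hm]
      push_cast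
      ring
    rw [h1, Real.rpow_intCast, zpow_sub₀ (two_ne_zero), zpow_one, zpow_natCast]
  rw [hrpow]
  set H := {f : Fin n → ℤ | THom n d f} with hH
  by_cases hfin : H.Finite
  · -- denominator bound: H contains an injective image of (Fin m → Bool)
    have hlt : ∀ x : Fin n, (x : ℕ) / 2 < m := fun x => by
      have := x.2; omega
    set Φ : (Fin m → Bool) → (Fin n → ℤ) := fun g x =>
      if Even (x : ℕ) then 0 else (if g ⟨(x : ℕ) / 2, hlt x⟩ then 1 else -1) with hΦ
    have hΦinj : Function.Injective Φ := by
      intro g g' h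
      funext i
      have h2 : (2 * (i : ℕ) + 1) < n := by have := i.2; omega
      have hodd : ¬ Even ((((⟨2 * (i : ℕ) + 1, h2⟩ : Fin n)) : ℕ)) := by
        simp only [Fin.val_mk]
        simp [Nat.even_add_one, Nat.even_mul]
      have hx := congrFun h ⟨2 * (i : ℕ) + 1, h2⟩
      simp only [hΦ] at hx
      rw [if_neg hodd, if_neg hodd] at hx
      have hfe : (⟨(((⟨2 * (i : ℕ) + 1, h2⟩ : Fin n)) : ℕ) / 2,
          hlt ⟨2 * (i : ℕ) + 1, h2⟩⟩ : Fin m) = i := by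
        apply Fin.ext
        simp only [Fin.val_mk]
        omega
      rw [hfe] at hx
      by_cases hb : g i <;> by_cases hb' : g' i <;> simp_all
    have hΦmem : ∀ g, Φ g ∈ H := by
      intro g
      constructor
      · intro x hx
        simp [hΦ, hx]
      · rintro x y ⟨ho, -⟩
        have hpar : (x : ℕ) % 2 ≠ (y : ℕ) % 2 := by
          set A := ((((x : ℕ) : ℤ)) - (((y : ℕ) : ℤ))).natAbs with hA
          obtain ⟨k, hk⟩ := ho
          rcases le_total A (n - A) with h | h
          · rw [min_eq_left h] at hk; omega
          · rw [min_eq_right h] at hk; omega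
        simp only [hΦ]
        rcases Nat.even_or_odd (x : ℕ) with hx | hx
        · have hy : ¬ Even (y : ℕ) := by
            rw [Nat.even_iff] at hx ⊢; omega
          rw [if_pos hx, if_neg hy]
          split <;> norm_num
        · have hx' : ¬ Even (x : ℕ) := by
            rw [Nat.odd_iff] at hx; rw [Nat.even_iff]; omega
          have hy : Even (y : ℕ) := by
            rw [Nat.odd_iff] at hx; rw [Nat.even_iff]; omega
          rw [if_neg hx', if_pos hy]
          split <;> norm_num
    have hD : (2 : ℕ) ^ m ≤ H.ncard := by
      have hsub : Set.range Φ ⊆ H := by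
        rintro _ ⟨g, rfl⟩; exact hΦmem g
      have h1 := Set.ncard_le_ncard hsub hfin
      have h2 : (Set.range Φ).ncard = 2 ^ m := by
        rw [Set.ncard_eq_toFinset_card', Set.toFinset_range]
        rw [Finset.card_image_of_injective _ hΦinj]
        simp
      omega
    -- numerator bound: the set has at most 2 elements
    have hNsub : {f : Fin n → ℤ | THom n d f ∧ (Set.range f).ncard < 3} ⊆
        {(fun x : Fin n => if Even (x : ℕ) then (0:ℤ) else 1), (fun x : Fin n => if Even (x : ℕ) then (0:ℤ) else -1)} := by
      rintro f ⟨hf, hr⟩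
      have h1n : 1 < n := by omega
      have hf0 : f ⟨0, hn⟩ = 0 := hf.1 ⟨0, hn⟩ rfl
      have haval : f ⟨1, h1n⟩ = 1 ∨ f ⟨1, h1n⟩ = -1 := by
        have h1 := thom_adj hf hn2 0 h1n hn
        rw [hf0, sub_zero] at h1
        exact abs_eq_one_cases h1
      have hmem : ∀ x : Fin n, f x = 0 ∨ f x = f ⟨1, h1n⟩ := by
        intro x
        by_contra hc
        push_neg at hc
        obtain ⟨hc1, hc2⟩ := hc
        have hsub : ({0, f ⟨1, h1n⟩, f x} : Set ℤ) ⊆ Set.range f := by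
          intro z hz
          simp only [Set.mem_insert_iff, Set.mem_singleton_iff] at hz
          rcases hz with rfl | rfl | rfl
          · exact ⟨⟨0, hn⟩, hf0⟩
          · exact ⟨⟨1, h1n⟩, rfl⟩
          · exact ⟨x, rfl⟩
        have hne1 : (0 : ℤ) ∉ ({f ⟨1, h1n⟩, f x} : Set ℤ) := by
          simp only [Set.mem_insert_iff, Set.mem_singleton_iff]
          push_neg
          refine ⟨?_, fun h => hc1 h.symm⟩
          rcases haval with h | h <;> omega
        have hne2 : f ⟨1, h1n⟩ ∉ ({f x} : Set ℤ) := by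
          simp only [Set.mem_singleton_iff]
          exact fun h => hc2 h.symm
        have h3 : ({0, f ⟨1, h1n⟩, f x} : Set ℤ).ncard = 3 := by
          rw [Set.ncard_insert_of_notMem hne1 (Set.Finite.insert _ (Set.finite_singleton _)),
            Set.ncard_insert_of_notMem hne2 (Set.finite_singleton _), Set.ncard_singleton]
        have := Set.ncard_le_ncard hsub (Set.finite_range f)
        omega
      have hodd1 : f ⟨1, h1n⟩ % 2 = 1 := by
        rcases haval with h | h <;> omega
      have hkey : ∀ x : Fin n, f x = if Even (x : ℕ) then 0 else f ⟨1, h1n⟩ := by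
        intro x
        have hp := thom_parity hf hn2 (x : ℕ) x.2
        rw [Fin.eta, Int.even_iff] at hp
        by_cases hev : Even (x : ℕ)
        · rw [if_pos hev]
          rw [Nat.even_iff] at hev
          rcases hmem x with h | h
          · exact h
          · exfalso; omega
        · rw [if_neg hev]
          rw [Nat.even_iff] at hev
          rcases hmem x with h | h
          · exfalso; omega
          · exact h
      simp only [Set.mem_insert_iff, Set.mem_singleton_iff]
      rcases haval with h | h
      · left
        funext x
        simp only [hkey x, h]
      · right
        funext x
        simp only [hkey x, h]
    have hN : Set.ncard {f : Fin n → ℤ | THom n d f ∧ (Set.range f).ncard < 3} ≤ 2 := by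
      refine le_trans (Set.ncard_le_ncard hNsub
        (Set.Finite.insert _ (Set.finite_singleton _))) ?_
      refine le_trans (Set.ncard_insert_le _ _) ?_
      simp [Set.ncard_singleton]
    refine div_le_div₀ (by norm_num) ?_ (by positivity) ?_
    · exact_mod_cast hN
    · exact_mod_cast hD
  · rw [Set.Infinite.ncard hfin]
    simp only [Nat.cast_zero, div_zero]
    positivity
end

section
/- Let f ∈ Hom(P_{n,d},0). If for some indices i and m ≥ 1 one has f(i+m) − f(i) ≥ 3, then m ≥ 2d+3. Moreover, if m = 2d+3 then necessarily (f(i+1)−f(i), f(i+2)−f(i), ..., f(i+2d+3)−f(i)) = (1,2,1,2,...,1,2,1,2,3). -/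
/-- Let `f ∈ Hom(P_{n,d},0)`. If `f(i+m) − f(i) ≥ 3` for some
`0 ≤ i ≤ i+m ≤ n` with `m ≥ 1`, then `m ≥ 2d+3`. Moreover, if `m = 2d+3` then
necessarily `(f(i+1)−f(i), …, f(i+2d+3)−f(i)) = (1,2,1,2,…,1,2,3)`. -/
theorem stmt10 (n d : ℕ) (f : ℕ → ℤ) (hf0 : f 0 = 0)
    (hf : ∀ i j : ℕ, i ≤ n → j ≤ n →
      (∃ k, k ≤ d ∧ |(i : ℤ) - (j : ℤ)| = 2 * k + 1) → |f i - f j| = 1)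
    (i m : ℕ) (him : i + m ≤ n) (hm : 1 ≤ m) (h3 : 3 ≤ f (i + m) - f i) :
    2 * d + 3 ≤ m ∧
    (m = 2 * d + 3 → ∀ j : ℕ, 1 ≤ j → j ≤ 2 * d + 3 →
      f (i + j) - f i = if j = 2 * d + 3 then 3 else if Odd j then 1 else 2) := by
  have jump : ∀ a g : ℕ, a + g ≤ n → g ≤ 2 * d + 1 → Odd g →
      f (a + g) - f a = 1 ∨ f (a + g) - f a = -1 := by
    intro a g hag hgle hodd
    obtain ⟨k, hk⟩ := hodd
    have h := hf (a + g) a hag (by omega) ⟨k, by omega, by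
      push_cast
      rw [add_sub_cancel_left, abs_of_nonneg (by positivity)]
      push_cast [hk]; ring⟩
    rcases (abs_eq (by norm_num : (0:ℤ) ≤ 1)).mp h with h | h
    · exact Or.inl h
    · exact Or.inr h
  have part1 : 2 * d + 3 ≤ m := by
    by_contra hcon
    push_neg at hcon
    rcases Nat.even_or_odd m with he | ho
    · -- m even, m = 1 + (m-1)
      have hm2 : 2 ≤ m := by
        rcases he with ⟨t, ht⟩; omega
      have h1 : f (i + 1) - f i = 1 ∨ f (i + 1) - f i = -1 :=
        jump i 1 (by omega) (by omega) ⟨0, by ring⟩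
      have h2 : f (i + 1 + (m - 1)) - f (i + 1) = 1 ∨
          f (i + 1 + (m - 1)) - f (i + 1) = -1 := by
        apply jump (i + 1) (m - 1) (by omega) (by omega)
        rcases he with ⟨t, ht⟩; exact ⟨t - 1, by omega⟩
      have : i + 1 + (m - 1) = i + m := by omega
      rw [this] at h2
      rcases h1 with h1 | h1 <;> rcases h2 with h2 | h2 <;> linarith
    · obtain ⟨t, ht⟩ := ho
      have h1 := jump i m him (by omega) ⟨t, ht⟩
      rcases h1 with h1 | h1 <;> linarith
  refine ⟨part1, ?_⟩
  intro hmeq j hj1 hj2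
  subst hmeq
  -- even case helper
  have heven : ∀ j : ℕ, 2 ≤ j → j ≤ 2 * d + 2 → Even j → f (i + j) - f i = 2 := by
    intro j hj2' hjle ⟨t, ht⟩
    have h1 : f (i + 1) - f i = 1 ∨ f (i + 1) - f i = -1 :=
      jump i 1 (by omega) (by omega) ⟨0, by ring⟩
    have h2 : f (i + 1 + (j - 1)) - f (i + 1) = 1 ∨
        f (i + 1 + (j - 1)) - f (i + 1) = -1 :=
      jump (i + 1) (j - 1) (by omega) (by omega) ⟨t - 1, by omega⟩
    have e1 : i + 1 + (j - 1) = i + j := by omega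
    rw [e1] at h2
    have h4 : f (i + j + (2 * d + 3 - j)) - f (i + j) = 1 ∨
        f (i + j + (2 * d + 3 - j)) - f (i + j) = -1 :=
      jump (i + j) (2 * d + 3 - j) (by omega) (by omega) ⟨d + 1 - t, by omega⟩
    have e2 : i + j + (2 * d + 3 - j) = i + (2 * d + 3) := by omega
    rw [e2] at h4
    rcases h1 with h1 | h1 <;> rcases h2 with h2 | h2 <;> rcases h4 with h4 | h4 <;> linarith
  have h2v : f (i + 2) - f i = 2 := heven 2 le_rfl (by omega) ⟨1, rfl⟩
  have htop : f (i + (2 * d + 3)) - f i = 3 := by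
    have h4 : f (i + 2 + (2 * d + 1)) - f (i + 2) = 1 ∨
        f (i + 2 + (2 * d + 1)) - f (i + 2) = -1 :=
      jump (i + 2) (2 * d + 1) (by omega) le_rfl ⟨d, by ring⟩
    have e : i + 2 + (2 * d + 1) = i + (2 * d + 3) := by omega
    rw [e] at h4
    rcases h4 with h4 | h4 <;> linarith
  by_cases hj : j = 2 * d + 3
  · simp [hj, htop]
  · rw [if_neg hj]
    rcases Nat.even_or_odd j with he | ho
    · rw [if_neg (by simpa [Nat.not_odd_iff_even] using he)]
      exact heven j (by rcases he with ⟨t, ht⟩; omega) (by omega) he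
    · rw [if_pos ho]
      -- j odd, j ≤ 2d+1; g(j+1) = 2 and step
      have hjle : j ≤ 2 * d + 1 := by rcases ho with ⟨t, ht⟩; omega
      have hnext : f (i + (j + 1)) - f i = 2 :=
        heven (j + 1) (by omega) (by omega) (by rcases ho with ⟨t, ht⟩; exact ⟨t + 1, by omega⟩)
      have hstep : f (i + j + 1) - f (i + j) = 1 ∨ f (i + j + 1) - f (i + j) = -1 :=
        jump (i + j) 1 (by omega) (by omega) ⟨0, by ring⟩
      have e : i + j + 1 = i + (j + 1) := by omega
      rw [e] at hstep
      have hj' : f (i + j) - f i = 1 ∨ f (i + j) - f i = -1 :=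
        jump i j (by omega) hjle ho
      rcases hj' with h | h <;> rcases hstep with hs | hs <;> linarith
end

section
/- Fix positive integers n, d, and r ≥ 0. The number of subsets I ⊂ {1,...,n} satisfying: min I > 2d+1, |I| = r, min I is even, and for consecutive elements s < s' of I the difference s'−s is odd and at least 2d+1, equals the binomial coefficient C(⌊(n−r−1)/2⌋ − (d−1)r, r). -/
def phiMap (d : ℕ) {r : ℕ} (s : Fin r → ℕ) : Fin r → ℕ :=
  fun j => (s j + (j : ℕ)) / 2 - d * ((j : ℕ) + 1) - 1

def psiMap (d : ℕ) {r : ℕ} (t : Fin r → ℕ) : Fin r → ℕ :=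
  fun j => 2 * (t j - (j : ℕ)) + (2 * d + 1) * ((j : ℕ) + 1) + 1

lemma strictMono_of_adj {r : ℕ} {f : Fin r → ℕ}
    (h : ∀ (m : ℕ) (hm : m + 1 < r), f ⟨m, Nat.lt_of_succ_lt hm⟩ < f ⟨m + 1, hm⟩) :
    StrictMono f := by
  have key : ∀ b (hb : b < r) a (ha : a < r), a < b → f ⟨a, ha⟩ < f ⟨b, hb⟩ := by
    intro b
    induction b with
    | zero => intro hb a ha hab; omega
    | succ m ih =>
      intro hb a ha hab
      rcases Nat.lt_or_ge a m with h1 | h1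
      · exact (ih (by omega) a ha h1).trans (h m hb)
      · have : a = m := by omega
        subst this
        exact h a hb
  intro j k hjk
  exact key k.1 k.2 j.1 j.2 hjk

lemma fin_le_of_strictMono {r : ℕ} {f : Fin r → ℕ} (hf : StrictMono f) :
    ∀ m (hm : m < r), m ≤ f ⟨m, hm⟩ := by
  intro m
  induction m with
  | zero => intro _; exact Nat.zero_le _
  | succ k ih =>
    intro hm
    have h1 := ih (by omega)
    have h2 : f ⟨k, by omega⟩ < f ⟨k + 1, hm⟩ := hf (by simp [Fin.lt_def])
    omega

lemma keyFacts {d r : ℕ} {s : Fin r → ℕ}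
    (h1 : StrictMono s) (h3 : ∀ j, 2 * d + 1 < s j)
    (h4 : ∀ j : Fin r, (j : ℕ) = 0 → Even (s j))
    (h5 : ∀ j k : Fin r, (k : ℕ) = (j : ℕ) + 1 → Odd (s k - s j) ∧ 2 * d + 1 ≤ s k - s j) :
    ∀ m (hm : m < r), s ⟨m, hm⟩ % 2 = m % 2 ∧ (2 * d + 1) * (m + 1) + 1 ≤ s ⟨m, hm⟩ := by
  intro m
  induction m with
  | zero =>
    intro hm
    have he := h4 ⟨0, hm⟩ rfl
    rw [Nat.even_iff] at he
    have hb := h3 ⟨0, hm⟩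
    rw [show (2 * d + 1) * (0 + 1) = 2 * d + 1 from by ring]
    omega
  | succ m ih =>
    intro hm
    have hm' : m < r := by omega
    obtain ⟨p1, p2⟩ := ih hm'
    obtain ⟨q1, q2⟩ := h5 ⟨m, hm'⟩ ⟨m + 1, hm⟩ rfl
    rw [Nat.odd_iff] at q1
    have hlt : s ⟨m, hm'⟩ < s ⟨m + 1, hm⟩ := h1 (by simp [Fin.lt_def])
    rw [show (2 * d + 1) * (m + 1 + 1) = (2 * d + 1) * (m + 1) + (2 * d + 1) from by ring]
    generalize hc : (2 * d + 1) * (m + 1) = c at p2 ⊢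
    omega


lemma main_bij (n d r : ℕ) (hd : 0 < d) :
    Set.ncard {s : Fin r → ℕ | StrictMono s ∧ (∀ j, s j ≤ n) ∧
        (∀ j, 2 * d + 1 < s j) ∧
        (∀ j : Fin r, (j : ℕ) = 0 → Even (s j)) ∧
        (∀ j k : Fin r, (k : ℕ) = (j : ℕ) + 1 →
          Odd (s k - s j) ∧ 2 * d + 1 ≤ s k - s j)} =
      Set.ncard {t : Fin r → ℕ | StrictMono t ∧
        ∀ j, t j < (n - r - 1) / 2 - (d - 1) * r} := by
  classical
  set A := {s : Fin r → ℕ | StrictMono s ∧ (∀ j, s j ≤ n) ∧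
        (∀ j, 2 * d + 1 < s j) ∧
        (∀ j : Fin r, (j : ℕ) = 0 → Even (s j)) ∧
        (∀ j k : Fin r, (k : ℕ) = (j : ℕ) + 1 →
          Odd (s k - s j) ∧ 2 * d + 1 ≤ s k - s j)} with hA
  set B := {t : Fin r → ℕ | StrictMono t ∧
        ∀ j, t j < (n - r - 1) / 2 - (d - 1) * r} with hB
  have hXP : (d - 1) * r + r = d * r := by
    rw [Nat.sub_one_mul]
    have := Nat.le_mul_of_pos_left r hd
    omega
  -- Ψ ∘ Φ = id on A
  have hPsiPhi : ∀ s ∈ A, psiMap d (phiMap d s) = s := by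
    rintro s ⟨h1, h2, h3, h4, h5⟩
    have hk := keyFacts h1 h3 h4 h5
    funext j
    obtain ⟨m, hm⟩ := j
    obtain ⟨p1, p2⟩ := hk m hm
    show 2 * (((s ⟨m, hm⟩ + m) / 2 - d * (m + 1) - 1) - m) + (2 * d + 1) * (m + 1) + 1
        = s ⟨m, hm⟩
    rw [show (2 * d + 1) * (m + 1) = 2 * (d * (m + 1)) + (m + 1) from by ring] at p2 ⊢
    generalize d * (m + 1) = c at p2 ⊢
    omega
  -- Φ ∘ Ψ = id on B
  have hPhiPsi : ∀ t ∈ B, phiMap d (psiMap d t) = t := by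
    rintro t ⟨hmt, hbt⟩
    funext j
    obtain ⟨m, hm⟩ := j
    have hle : m ≤ t ⟨m, hm⟩ := fin_le_of_strictMono hmt m hm
    show (2 * (t ⟨m, hm⟩ - m) + (2 * d + 1) * (m + 1) + 1 + m) / 2 - d * (m + 1) - 1
        = t ⟨m, hm⟩
    rw [show (2 * d + 1) * (m + 1) = 2 * (d * (m + 1)) + (m + 1) from by ring]
    generalize d * (m + 1) = c
    omega
  -- Φ maps A into B
  have hphi_mem : ∀ s ∈ A, phiMap d s ∈ B := by
    rintro s ⟨h1, h2, h3, h4, h5⟩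
    have hk := keyFacts h1 h3 h4 h5
    have hmono : StrictMono (phiMap d s) := by
      apply strictMono_of_adj
      intro m hm
      have hm' : m < r := Nat.lt_of_succ_lt hm
      obtain ⟨p1, p2⟩ := hk m hm'
      obtain ⟨g1, g2⟩ := h5 ⟨m, hm'⟩ ⟨m + 1, hm⟩ rfl
      rw [Nat.odd_iff] at g1
      have hlt : s ⟨m, hm'⟩ < s ⟨m + 1, hm⟩ := h1 (by simp [Fin.lt_def])
      show (s ⟨m, hm'⟩ + m) / 2 - d * (m + 1) - 1
          < (s ⟨m + 1, hm⟩ + (m + 1)) / 2 - d * (m + 1 + 1) - 1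
      rw [show d * (m + 1 + 1) = d * (m + 1) + d from by ring]
      rw [show (2 * d + 1) * (m + 1) = 2 * (d * (m + 1)) + (m + 1) from by ring] at p2
      generalize d * (m + 1) = c at p2 ⊢
      omega
    refine ⟨hmono, ?_⟩
    intro j
    have hr0 : 0 < r := j.pos
    have hrl : r - 1 < r := by omega
    have hlast : j ≤ (⟨r - 1, hrl⟩ : Fin r) := by
      rw [Fin.le_def]
      have := j.isLt
      simpa using by omega
    refine lt_of_le_of_lt (hmono.monotone hlast) ?_
    obtain ⟨p1, p2⟩ := hk (r - 1) hrl
    have hxn := h2 ⟨r - 1, hrl⟩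
    show (s ⟨r - 1, hrl⟩ + (r - 1)) / 2 - d * (r - 1 + 1) - 1
        < (n - r - 1) / 2 - (d - 1) * r
    rw [show r - 1 + 1 = r from by omega] at p2 ⊢
    rw [show (2 * d + 1) * r = 2 * (d * r) + r from by ring] at p2
    generalize hP : d * r = P at p2 hXP ⊢
    generalize hX : (d - 1) * r = X at hXP ⊢
    omega
  -- Ψ maps B into A
  have hpsi_mem : ∀ t ∈ B, psiMap d t ∈ A := by
    rintro t ⟨hmt, hbt⟩
    have hle := fin_le_of_strictMono hmt
    refine ⟨?_, ?_, ?_, ?_, ?_⟩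
    · apply strictMono_of_adj
      intro m hm
      have hm' : m < r := Nat.lt_of_succ_lt hm
      have hlt : t ⟨m, hm'⟩ < t ⟨m + 1, hm⟩ := hmt (by simp [Fin.lt_def])
      have h0 := hle m hm'
      show 2 * (t ⟨m, hm'⟩ - m) + (2 * d + 1) * (m + 1) + 1
          < 2 * (t ⟨m + 1, hm⟩ - (m + 1)) + (2 * d + 1) * (m + 1 + 1) + 1
      rw [show (2 * d + 1) * (m + 1 + 1) = (2 * d + 1) * (m + 1) + (2 * d + 1) from by ring]
      generalize (2 * d + 1) * (m + 1) = c
      omega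
    · intro j
      obtain ⟨m, hm⟩ := j
      have hb := hbt ⟨m, hm⟩
      have h0 := hle m hm
      show 2 * (t ⟨m, hm⟩ - m) + (2 * d + 1) * (m + 1) + 1 ≤ n
      have e1 : 2 * d * (m + 1) + 2 * d * (r - (m + 1)) = 2 * d * r := by
        rw [← Nat.mul_add]
        congr 1
        omega
      have e2 : r - (m + 1) ≤ 2 * d * (r - (m + 1)) := Nat.le_mul_of_pos_left _ (by omega)
      have e3 : 2 * d * r = 2 * (d * r) := by ring
      rw [show (2 * d + 1) * (m + 1) = 2 * d * (m + 1) + (m + 1) from by ring]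
      generalize 2 * d * (m + 1) = A1 at e1 ⊢
      generalize 2 * d * (r - (m + 1)) = B1 at e1 e2
      generalize 2 * d * r = C1 at e1 e3
      generalize hP : d * r = P at e3 hXP
      generalize hX : (d - 1) * r = X at hXP hb
      omega
    · intro j
      obtain ⟨m, hm⟩ := j
      show 2 * d + 1 < 2 * (t ⟨m, hm⟩ - m) + (2 * d + 1) * (m + 1) + 1
      have h1 : 2 * d + 1 ≤ (2 * d + 1) * (m + 1) := Nat.le_mul_of_pos_right _ (by omega)
      generalize (2 * d + 1) * (m + 1) = c at h1 ⊢
      omega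
    · intro j hj0
      obtain ⟨m, hm⟩ := j
      have hm0 : m = 0 := hj0
      subst hm0
      rw [Nat.even_iff]
      show (2 * (t ⟨0, hm⟩ - 0) + (2 * d + 1) * (0 + 1) + 1) % 2 = 0
      rw [show (2 * d + 1) * (0 + 1) = 2 * d + 1 from by ring]
      omega
    · intro j k hjk
      obtain ⟨mj, hmj⟩ := j
      obtain ⟨mk, hmk⟩ := k
      have hk' : mk = mj + 1 := hjk
      subst hk'
      have hlt : t ⟨mj, hmj⟩ < t ⟨mj + 1, hmk⟩ := hmt (by simp [Fin.lt_def])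
      have h0 := hle mj hmj
      constructor
      · rw [Nat.odd_iff]
        show (2 * (t ⟨mj + 1, hmk⟩ - (mj + 1)) + (2 * d + 1) * (mj + 1 + 1) + 1
            - (2 * (t ⟨mj, hmj⟩ - mj) + (2 * d + 1) * (mj + 1) + 1)) % 2 = 1
        rw [show (2 * d + 1) * (mj + 1 + 1) = (2 * d + 1) * (mj + 1) + (2 * d + 1) from by ring]
        generalize (2 * d + 1) * (mj + 1) = c
        omega
      · show 2 * d + 1 ≤ 2 * (t ⟨mj + 1, hmk⟩ - (mj + 1)) + (2 * d + 1) * (mj + 1 + 1) + 1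
            - (2 * (t ⟨mj, hmj⟩ - mj) + (2 * d + 1) * (mj + 1) + 1)
        rw [show (2 * d + 1) * (mj + 1 + 1) = (2 * d + 1) * (mj + 1) + (2 * d + 1) from by ring]
        generalize (2 * d + 1) * (mj + 1) = c
        omega
  have hinj : Set.InjOn (phiMap d) A := by
    intro s hs s' hs' h
    rw [← hPsiPhi s hs, ← hPsiPhi s' hs', h]
  have himg : phiMap d '' A = B := by
    ext t
    constructor
    · rintro ⟨s, hs, rfl⟩
      exact hphi_mem s hs
    · intro ht
      exact ⟨psiMap d t, hpsi_mem t ht, hPhiPsi t ht⟩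
  rw [← himg, Set.ncard_image_of_injOn hinj]

lemma aux_count (M r : ℕ) :
    Set.ncard {t : Fin r → ℕ | StrictMono t ∧ ∀ j, t j < M} = M.choose r := by
  classical
  haveI : WellFoundedLT (Fin r) := inferInstance
  have hinj : Set.InjOn (fun t : Fin r → ℕ => Finset.image t Finset.univ)
      {t : Fin r → ℕ | StrictMono t ∧ ∀ j, t j < M} := by
    intro t ht t' ht' h
    obtain ⟨hmt, -⟩ := ht
    obtain ⟨hmt', -⟩ := ht'
    have hr : Set.range t = Set.range t' := by
      have := congrArg (fun s : Finset ℕ => (s : Set ℕ)) h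
      simpa [Finset.coe_image, Set.image_univ] using this
    exact (StrictMono.range_inj hmt hmt').1 hr
  have himg : (fun t : Fin r → ℕ => Finset.image t Finset.univ) ''
        {t : Fin r → ℕ | StrictMono t ∧ ∀ j, t j < M}
      = ↑(Finset.powersetCard r (Finset.range M)) := by
    ext S
    constructor
    · rintro ⟨t, ⟨ht, htM⟩, rfl⟩
      simp only [Finset.mem_coe, Finset.mem_powersetCard]
      constructor
      · intro x hx
        simp only [Finset.mem_image, Finset.mem_univ, true_and] at hx
        obtain ⟨j, rfl⟩ := hx
        exact Finset.mem_range.2 (htM j)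
      · rw [Finset.card_image_of_injective _ ht.injective, Finset.card_univ, Fintype.card_fin]
    · intro hS
      simp only [Finset.mem_coe, Finset.mem_powersetCard] at hS
      obtain ⟨hsub, hcard⟩ := hS
      refine ⟨⇑(S.orderEmbOfFin hcard), ⟨?_, ?_⟩, ?_⟩
      · exact (S.orderEmbOfFin hcard).strictMono
      · intro j; exact Finset.mem_range.1 (hsub (S.orderEmbOfFin_mem hcard j))
      · apply Finset.coe_injective
        rw [Finset.coe_image, Finset.coe_univ, Set.image_univ]
        exact S.range_orderEmbOfFin hcard
  rw [← Set.ncard_image_of_injOn hinj, himg, Set.ncard_coe_finset,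
    Finset.card_powersetCard, Finset.card_range]

/-- Fix positive integers `n`, `d` and `r ≥ 0`. The number of subsets
`I ⊂ {1,…,n}`, described by their increasing enumeration `2d+1 < s 0 < s 1 < ⋯ < s (r-1) ≤ n`,
with `s 0` even and each gap `s (j+1) − s j` odd and at least `2d+1`, equals
`C(⌊(n−r−1)/2⌋ − (d−1)r, r)` (interpreted as `0` when the top argument is less than `r`). -/
theorem stmt11 (n d r : ℕ) (hn : 0 < n) (hd : 0 < d) :
    Set.ncard {s : Fin r → ℕ | StrictMono s ∧ (∀ j, s j ≤ n) ∧
        (∀ j, 2 * d + 1 < s j) ∧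
        (∀ j : Fin r, (j : ℕ) = 0 → Even (s j)) ∧
        (∀ j k : Fin r, (k : ℕ) = (j : ℕ) + 1 →
          Odd (s k - s j) ∧ 2 * d + 1 ≤ s k - s j)} =
      Nat.choose ((n - r - 1) / 2 - (d - 1) * r) r := by
  rw [main_bij n d r hd, aux_count]
end

section
/- Fix positive integers n (even), d, and r ≥ 1. The number of subsets I of ℤ/nℤ such that: |I| = 2r, for any two distinct elements x, y of I the clockwise distance from x to its successor in I is odd and at least 2d+3, equals (n/(2r))·C(n/2 − (2d+1)r − 1, 2r − 1). -/
/-- Clockwise distance on the discrete torus `{0,…,n−1}`: the smallest `k ≥ 0` with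
`x + k ≡ y (mod n)`. -/
def rhoPlus (n : ℕ) (x y : Fin n) : ℕ := ((y : ℕ) + n - (x : ℕ)) % n

section basic
open Fin.NatCast
variable {n : ℕ}

lemma rhoPlus_eq_sub [NeZero n] (x y : Fin n) : rhoPlus n x y = ((y - x : Fin n) : ℕ) := by
  have hx : (x : ℕ) ≤ n := le_of_lt x.isLt
  rw [rhoPlus, Fin.sub_def]
  congr 1
  omega

lemma rhoPlus_lt [NeZero n] (x y : Fin n) : rhoPlus n x y < n := by
  rw [rhoPlus_eq_sub]; exact (y - x).isLt

lemma rhoPlus_self [NeZero n] (x : Fin n) : rhoPlus n x x = 0 := by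
  rw [rhoPlus_eq_sub, sub_self, Fin.val_zero]

lemma rhoPlus_add_left [NeZero n] (x u v : Fin n) :
    rhoPlus n (x + u) (x + v) = rhoPlus n u v := by
  rw [rhoPlus_eq_sub, rhoPlus_eq_sub]
  congr 1
  abel

lemma rhoPlus_cast [NeZero n] (a b : ℕ) (ha : a < n) (hb : b < n) :
    rhoPlus n a b = if a ≤ b then b - a else n - (a - b) := by
  rw [rhoPlus, Fin.val_cast_of_lt ha, Fin.val_cast_of_lt hb]
  split_ifs with h
  · have h1 : b + n - a = (b - a) + n := by omega
    rw [h1, Nat.add_mod_right]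
    exact Nat.mod_eq_of_lt (by omega)
  · have h2 : b + n - a < n := by omega
    rw [Nat.mod_eq_of_lt h2]
    omega

lemma rhoPlus_add_cast [NeZero n] (x : Fin n) (c : ℕ) (hc : c < n) :
    rhoPlus n x (x + (c : Fin n)) = c := by
  rw [rhoPlus_eq_sub, add_sub_cancel_left, Fin.val_cast_of_lt hc]

end basic

section gaps
open Fin.NatCast
variable {n m : ℕ}

/-- cyclic gap sequence of an increasing sequence `q` inside `{0,…,n-1}` -/
def gapOf (n : ℕ) {m : ℕ} (q : Fin m → ℕ) (i : Fin m) : ℕ :=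
  if h : (i : ℕ) + 1 < m then q ⟨(i : ℕ) + 1, h⟩ - q i else n - q i

/-- cyclic successor on `Fin m` (needs `0 < m` implicitly from `i`) -/
def cycSucc {m : ℕ} (i : Fin m) : Fin m :=
  if h : (i : ℕ) + 1 < m then ⟨(i : ℕ) + 1, h⟩ else ⟨0, by omega⟩

variable [NeZero n] (x : Fin n) (q : Fin m → ℕ)

/-- the elements of the circular set determined by base point `x` and offsets `q` -/
def elemOf (x : Fin n) (q : Fin m → ℕ) (i : Fin m) : Fin n := x + ((q i : ℕ) : Fin n)

variable (hq : StrictMono q) (hlt : ∀ i, q i < n)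

include hq hlt in
lemma rhoPlus_elemOf (i j : Fin m) :
    rhoPlus n (elemOf x q i) (elemOf x q j) =
      if i ≤ j then q j - q i else n - (q i - q j) := by
  rw [elemOf, elemOf, rhoPlus_add_left, rhoPlus_cast _ _ (hlt i) (hlt j)]
  by_cases h : i ≤ j
  · rw [if_pos h, if_pos (hq.monotone h)]
  · rw [if_neg h, if_neg (by simpa using hq (lt_of_not_ge h))]

include hq hlt in
lemma elemOf_injective : Function.Injective (elemOf x q) := by
  intro i j hij
  have : ((q i : ℕ) : Fin n) = ((q j : ℕ) : Fin n) := by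
    exact add_left_cancel hij
  have h2 : q i = q j := by
    have := congrArg Fin.val this
    rwa [Fin.val_cast_of_lt (hlt i), Fin.val_cast_of_lt (hlt j)] at this
  exact hq.injective h2

variable (hq0 : ∀ h : 0 < m, q ⟨0, h⟩ = 0)

include hq hlt in
lemma gapOf_le_rhoPlus (i j : Fin m) (hij : j ≠ i) :
    gapOf n q i ≤ rhoPlus n (elemOf x q i) (elemOf x q j) := by
  rw [rhoPlus_elemOf x q hq hlt]
  rcases lt_or_gt_of_ne hij with h | h
  · -- j < i
    rw [if_neg (not_le.2 h)]
    rw [gapOf]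
    split_ifs with hsucc
    · have h1 : q i < q ⟨(i : ℕ) + 1, hsucc⟩ := hq (by simp [Fin.lt_def])
      have := hlt ⟨(i : ℕ) + 1, hsucc⟩
      omega
    · omega
  · -- i < j
    rw [if_pos h.le]
    rw [gapOf]
    have him : (i : ℕ) + 1 < m := by
      have := j.isLt
      have : (i : ℕ) < (j : ℕ) := h
      omega
    rw [dif_pos him]
    have h1 : q ⟨(i : ℕ) + 1, him⟩ ≤ q j := hq.monotone (by
      rw [Fin.le_def]; exact h)
    omega

include hq hlt hq0 in
lemma rhoPlus_cycSucc (hm : 2 ≤ m) (i : Fin m) :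
    rhoPlus n (elemOf x q i) (elemOf x q (cycSucc i)) = gapOf n q i := by
  rw [rhoPlus_elemOf x q hq hlt]
  by_cases h : (i : ℕ) + 1 < m
  · rw [cycSucc, dif_pos h, gapOf, dif_pos h,
      if_pos (by rw [Fin.le_def]; simp)]
  · have hi0 : (0 : ℕ) < (i : ℕ) := by
      have := i.isLt; omega
    rw [cycSucc, dif_neg h, gapOf, dif_neg h,
      if_neg (by rw [Fin.le_def]; simp; omega)]
    rw [hq0 (by omega)]
    omega

omit [NeZero n] in
include hq hlt in
lemma gapOf_pos (i : Fin m) : 0 < gapOf n q i := by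
  rw [gapOf]
  split_ifs with h
  · have : q i < q ⟨(i : ℕ) + 1, h⟩ := hq (by simp [Fin.lt_def])
    omega
  · have := hlt i
    omega

include hq hlt hq0 in
lemma elemOf_cycSucc_ne (hm : 2 ≤ m) (i : Fin m) :
    elemOf x q (cycSucc i) ≠ elemOf x q i := by
  intro hcon
  have h1 := rhoPlus_cycSucc x q hq hlt hq0 hm i
  rw [hcon, rhoPlus_self] at h1
  have := gapOf_pos q hq hlt i
  omega

end gaps

section psums
variable {n m : ℕ}

def fext (m : ℕ) (f : Fin m → ℕ) (k : ℕ) : ℕ := if h : k < m then f ⟨k, h⟩ else 1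

lemma fext_coe (f : Fin m → ℕ) (i : Fin m) : fext m f (i : ℕ) = f i := by
  rw [fext, dif_pos i.isLt]

def psum (f : Fin m → ℕ) (i : Fin m) : ℕ := ∑ j ∈ Finset.range (i : ℕ), fext m f j

lemma sum_fext (f : Fin m → ℕ) : ∑ k ∈ Finset.range m, fext m f k = ∑ i, f i := by
  rw [← Fin.sum_univ_eq_sum_range]
  exact Finset.sum_congr rfl fun i _ => fext_coe f i

lemma psum_zero (f : Fin m → ℕ) (h : 0 < m) : psum f ⟨0, h⟩ = 0 := by
  simp [psum]

lemma psum_mono (f : Fin m → ℕ) (h1 : ∀ i, 1 ≤ f i) : StrictMono (psum f) := by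
  intro i j hij
  have hij' : (i : ℕ) < (j : ℕ) := hij
  have e1 : ∑ k ∈ Finset.range ((i : ℕ) + 1), fext m f k
      = (∑ k ∈ Finset.range (i : ℕ), fext m f k) + fext m f (i : ℕ) :=
    Finset.sum_range_succ _ _
  have e2 : (1 : ℕ) ≤ fext m f (i : ℕ) := by rw [fext_coe]; exact h1 i
  have e3 : ∑ k ∈ Finset.range ((i : ℕ) + 1), fext m f k
      ≤ ∑ k ∈ Finset.range (j : ℕ), fext m f k :=
    Finset.sum_le_sum_of_subset (by intro k hk; simp at hk ⊢; omega)
  rw [psum, psum]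
  omega

lemma psum_add (f : Fin m → ℕ) (i : Fin m) :
    psum f i + f i = ∑ k ∈ Finset.range ((i : ℕ) + 1), fext m f k := by
  rw [psum, Finset.sum_range_succ, fext_coe]

lemma psum_lt (f : Fin m → ℕ) (hsum : ∑ i, f i = n) (h1 : ∀ i, 1 ≤ f i) (i : Fin m) :
    psum f i < n := by
  have e1 := psum_add f i
  have e2 : ∑ k ∈ Finset.range ((i : ℕ) + 1), fext m f k
      ≤ ∑ k ∈ Finset.range m, fext m f k :=
    Finset.sum_le_sum_of_subset (by intro k hk; simp at hk ⊢; have := i.isLt; omega)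
  rw [sum_fext, hsum] at e2
  have := h1 i
  omega

lemma gapOf_psum (f : Fin m → ℕ) (hsum : ∑ i, f i = n) (i : Fin m) :
    gapOf n (psum f) i = f i := by
  rw [gapOf]
  have e1 := psum_add f i
  split_ifs with h
  · have e2 : psum f ⟨(i : ℕ) + 1, h⟩ = ∑ k ∈ Finset.range ((i : ℕ) + 1), fext m f k := rfl
    omega
  · have hm : (i : ℕ) + 1 = m := by have := i.isLt; omega
    rw [hm, sum_fext, hsum] at e1
    omega

lemma psum_gapOf (q : Fin m → ℕ) (hq : StrictMono q)
    (hq0 : ∀ h : 0 < m, q ⟨0, h⟩ = 0) (i : Fin m) :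
    psum (gapOf n q) i = q i := by
  have claim : ∀ t (ht : t < m),
      ∑ k ∈ Finset.range t, fext m (gapOf n q) k = q ⟨t, ht⟩ := by
    intro t
    induction t with
    | zero => intro ht; simpa using (hq0 ht).symm
    | succ t ih =>
      intro ht
      have ht' : t < m := by omega
      rw [Finset.sum_range_succ, ih ht', fext, dif_pos ht', gapOf,
        dif_pos (show ((⟨t, ht'⟩ : Fin m) : ℕ) + 1 < m from ht)]
      have : q ⟨t, ht'⟩ < q ⟨t + 1, ht⟩ := hq (by simp [Fin.lt_def])
      simp only [Fin.val_mk] at *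
      omega
  have := claim (i : ℕ) i.isLt
  rw [psum]
  simpa using this

end psums

section main
open Fin.NatCast
variable {n m d : ℕ}

def GoodPred (n d : ℕ) (I : Finset (Fin n)) : Prop :=
  ∀ x ∈ I, ∀ y ∈ I, x ≠ y →
    (∀ z ∈ I, z ≠ x → rhoPlus n x y ≤ rhoPlus n x z) →
    Odd (rhoPlus n x y) ∧ 2 * d + 3 ≤ rhoPlus n x y

variable [NeZero n]

lemma add_rho (x y : Fin n) : x + ((rhoPlus n x y : ℕ) : Fin n) = y := by
  rw [rhoPlus_eq_sub, Fin.cast_val_eq_self]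
  abel

lemma rho_inj (x : Fin n) : Function.Injective (fun y => rhoPlus n x y) := by
  intro y z h
  simp only [rhoPlus_eq_sub] at h
  have h2 : y - x = z - x := Fin.val_injective h
  exact sub_left_injective h2

lemma image_card (x : Fin n) (q : Fin m → ℕ) (hq : StrictMono q) (hlt : ∀ i, q i < n) :
    (Finset.univ.image (elemOf x q)).card = m := by
  rw [Finset.card_image_of_injective _ (elemOf_injective x q hq hlt), Finset.card_univ,
    Fintype.card_fin]

lemma image_rho (x : Fin n) (q : Fin m → ℕ) (hlt : ∀ i, q i < n) :
    (Finset.univ.image (elemOf x q)).image (fun y => rhoPlus n x y)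
      = Finset.univ.image q := by
  rw [Finset.image_image]
  exact Finset.image_congr fun i _ => rhoPlus_add_cast x (q i) (hlt i)

lemma mem_image_self (x : Fin n) (q : Fin m → ℕ) (hq0 : ∀ h : 0 < m, q ⟨0, h⟩ = 0)
    (hm : 0 < m) : x ∈ Finset.univ.image (elemOf x q) :=
  Finset.mem_image.2 ⟨⟨0, hm⟩, Finset.mem_univ _, by rw [elemOf, hq0 hm]; simp⟩

lemma good_of_gaps (x : Fin n) (q : Fin m → ℕ) (hq : StrictMono q) (hlt : ∀ i, q i < n)
    (hq0 : ∀ h : 0 < m, q ⟨0, h⟩ = 0) (hm : 2 ≤ m)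
    (hcond : ∀ i, Odd (gapOf n q i) ∧ 2 * d + 3 ≤ gapOf n q i) :
    GoodPred n d (Finset.univ.image (elemOf x q)) := by
  intro a ha b hb hab hmin
  obtain ⟨i, -, rfl⟩ := Finset.mem_image.1 ha
  obtain ⟨j, -, rfl⟩ := Finset.mem_image.1 hb
  have hji : j ≠ i := fun h => hab (by rw [h])
  have h1 := gapOf_le_rhoPlus x q hq hlt i j hji
  have h2 : rhoPlus n (elemOf x q i) (elemOf x q j)
      ≤ rhoPlus n (elemOf x q i) (elemOf x q (cycSucc i)) :=
    hmin _ (Finset.mem_image_of_mem _ (Finset.mem_univ _))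
      (elemOf_cycSucc_ne x q hq hlt hq0 hm i)
  rw [rhoPlus_cycSucc x q hq hlt hq0 hm i] at h2
  have h3 : rhoPlus n (elemOf x q i) (elemOf x q j) = gapOf n q i := le_antisymm h2 h1
  rw [h3]; exact hcond i

lemma exists_q (I : Finset (Fin n)) (x : Fin n) (hx : x ∈ I) (hcard : I.card = m) :
    ∃ q : Fin m → ℕ, StrictMono q ∧ (∀ i, q i < n) ∧ (∀ h : 0 < m, q ⟨0, h⟩ = 0) ∧
      I = Finset.univ.image (elemOf x q) := by
  classical
  set J := I.image (fun y => rhoPlus n x y) with hJdef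
  have hJ : J.card = m := by
    rw [hJdef, Finset.card_image_of_injective _ (rho_inj x), hcard]
  have hrange : ∀ a : ℕ, a ∈ J → ∃ i, J.orderEmbOfFin hJ i = a := by
    intro a ha
    have h1 : a ∈ Set.range (J.orderEmbOfFin hJ) := by
      rw [Finset.range_orderEmbOfFin]; exact ha
    exact Set.mem_range.1 h1
  have hmemJ : ∀ i, (J.orderEmbOfFin hJ i : ℕ) ∈ J := fun i =>
    Finset.orderEmbOfFin_mem J hJ i
  refine ⟨fun i => J.orderEmbOfFin hJ i, (J.orderEmbOfFin hJ).strictMono, ?_, ?_, ?_⟩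
  · intro i
    obtain ⟨y, _, hxy⟩ := Finset.mem_image.1 (hmemJ i)
    show (J.orderEmbOfFin hJ i : ℕ) < n
    rw [← hxy]; exact rhoPlus_lt x y
  · intro h0
    have h0J : (0 : ℕ) ∈ J := Finset.mem_image.2 ⟨x, hx, rhoPlus_self x⟩
    obtain ⟨i, hi⟩ := hrange 0 h0J
    have hle : J.orderEmbOfFin hJ ⟨0, h0⟩ ≤ J.orderEmbOfFin hJ i :=
      (J.orderEmbOfFin hJ).monotone (by simp [Fin.le_def])
    show (J.orderEmbOfFin hJ ⟨0, h0⟩ : ℕ) = 0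
    omega
  · ext y
    simp only [Finset.mem_image, Finset.mem_univ, true_and]
    constructor
    · intro hy
      have hmem : rhoPlus n x y ∈ J := Finset.mem_image_of_mem _ hy
      obtain ⟨i, hi⟩ := hrange _ hmem
      exact ⟨i, by rw [elemOf, hi, add_rho]⟩
    · rintro ⟨i, rfl⟩
      obtain ⟨y', hy', hxy'⟩ := Finset.mem_image.1 (hmemJ i)
      have : elemOf x (fun i => (J.orderEmbOfFin hJ i : ℕ)) i = y' := by
        rw [elemOf, ← hxy', add_rho]
      rw [this]; exact hy'

lemma gaps_good (hm : 2 ≤ m) {I : Finset (Fin n)} {x : Fin n}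
    (hgood : GoodPred n d I) (q : Fin m → ℕ) (hq : StrictMono q) (hlt : ∀ i, q i < n)
    (hq0 : ∀ h : 0 < m, q ⟨0, h⟩ = 0)
    (hI : I = Finset.univ.image (elemOf x q)) (i : Fin m) :
    Odd (gapOf n q i) ∧ 2 * d + 3 ≤ gapOf n q i := by
  have h1 := rhoPlus_cycSucc x q hq hlt hq0 hm i
  rw [← h1]
  apply hgood (elemOf x q i)
    (by rw [hI]; exact Finset.mem_image_of_mem _ (Finset.mem_univ _))
    (elemOf x q (cycSucc i))
    (by rw [hI]; exact Finset.mem_image_of_mem _ (Finset.mem_univ _))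
    (Ne.symm (elemOf_cycSucc_ne x q hq hlt hq0 hm i))
  intro z hz hzne
  rw [hI] at hz
  obtain ⟨j, -, rfl⟩ := Finset.mem_image.1 hz
  have hji : j ≠ i := fun h => hzne (by rw [h])
  rw [h1]
  exact gapOf_le_rhoPlus x q hq hlt i j hji

omit [NeZero n] in
lemma sum_gapOf (hm : 2 ≤ m) (q : Fin m → ℕ) (hq : StrictMono q) (hlt : ∀ i, q i < n)
    (hq0 : ∀ h : 0 < m, q ⟨0, h⟩ = 0) : ∑ i, gapOf n q i = n := by
  have hm1 : m - 1 < m := by omega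
  have e1 := psum_add (gapOf n q) ⟨m - 1, hm1⟩
  rw [psum_gapOf q hq hq0] at e1
  have e2 : ((⟨m - 1, hm1⟩ : Fin m) : ℕ) + 1 = m := by simp; omega
  rw [e2, sum_fext] at e1
  have e3 : gapOf n q ⟨m - 1, hm1⟩ = n - q ⟨m - 1, hm1⟩ := by
    rw [gapOf, dif_neg (by simp; omega)]
  have := hlt ⟨m - 1, hm1⟩
  omega

lemma strictMono_image_eq {g g' : Fin m → ℕ} (hg : StrictMono g) (hg' : StrictMono g')
    (h : Finset.univ.image g = Finset.univ.image g') : g = g' := by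
  have hcard : (Finset.univ.image g).card = m := by
    rw [Finset.card_image_of_injective _ hg.injective, Finset.card_univ, Fintype.card_fin]
  have e1 : g = (Finset.univ.image g).orderEmbOfFin hcard :=
    Finset.orderEmbOfFin_unique hcard (fun i => Finset.mem_image_of_mem _ (Finset.mem_univ i)) hg
  have e2 : g' = (Finset.univ.image g).orderEmbOfFin hcard :=
    Finset.orderEmbOfFin_unique hcard
      (fun i => h ▸ Finset.mem_image_of_mem _ (Finset.mem_univ i)) hg'
  rw [e1, e2]

lemma main_count (hm : 2 ≤ m) :
    Nat.card {p : Finset (Fin n) × Fin n //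
        (p.1.card = m ∧ GoodPred n d p.1) ∧ p.2 ∈ p.1}
      = n * Nat.card {f : Fin m → ℕ //
          (∑ i, f i = n) ∧ ∀ i, Odd (f i) ∧ 2 * d + 3 ≤ f i} := by
  have key : Nat.card (Fin n × {f : Fin m → ℕ //
          (∑ i, f i = n) ∧ ∀ i, Odd (f i) ∧ 2 * d + 3 ≤ f i})
      = Nat.card {p : Finset (Fin n) × Fin n //
        (p.1.card = m ∧ GoodPred n d p.1) ∧ p.2 ∈ p.1} := by
    apply Nat.card_eq_of_bijective (fun p =>
      ⟨(Finset.univ.image (elemOf p.1 (psum p.2.1)), p.1), by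
        obtain ⟨s, f, hsum, hcond⟩ := p
        have h1 : ∀ i, 1 ≤ f i := fun i => le_trans (by omega) (hcond i).2
        have hq := psum_mono f h1
        have hlt := psum_lt f hsum h1
        have hq0 : ∀ h : 0 < m, psum f ⟨0, h⟩ = 0 := fun h => psum_zero f h
        refine ⟨⟨image_card s (psum f) hq hlt, ?_⟩, mem_image_self s (psum f) hq0 (by omega)⟩
        exact good_of_gaps s (psum f) hq hlt hq0 hm fun i => by
          rw [gapOf_psum f hsum i]; exact hcond i⟩)
    constructor
    · rintro ⟨s, f, hf⟩ ⟨s', f', hf'⟩ h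
      simp only [Subtype.mk.injEq, Prod.mk.injEq] at h
      obtain ⟨himg, hs⟩ := h
      subst hs
      have h1 : ∀ i, 1 ≤ f i := fun i => le_trans (by omega) (hf.2 i).2
      have h1' : ∀ i, 1 ≤ f' i := fun i => le_trans (by omega) (hf'.2 i).2
      have himg2 : Finset.univ.image (psum f) = Finset.univ.image (psum f') := by
        rw [← image_rho s (psum f) (psum_lt f hf.1 h1),
          ← image_rho s (psum f') (psum_lt f' hf'.1 h1'), himg]
      have hps : psum f = psum f' :=
        strictMono_image_eq (psum_mono f h1) (psum_mono f' h1') himg2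
      have : f = f' := by
        funext i
        rw [← gapOf_psum f hf.1 i, ← gapOf_psum f' hf'.1 i, hps]
      simp [this]
    · rintro ⟨⟨I, x⟩, ⟨⟨hcard, hgood⟩, hx⟩⟩
      obtain ⟨q, hq, hlt, hq0, hI⟩ := exists_q I x hx hcard
      have hconds := fun i => gaps_good hm hgood q hq hlt hq0 hI i
      have hsum := sum_gapOf hm q hq hlt hq0
      refine ⟨⟨x, ⟨gapOf n q, hsum, hconds⟩⟩, ?_⟩
      have hps : psum (gapOf n q) = q := funext (psum_gapOf q hq hq0)
      apply Subtype.ext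
      simp only [Prod.mk.injEq]
      exact ⟨by rw [hps, ← hI], trivial⟩
  rw [← key, Nat.card_prod, Nat.card_eq_fintype_card, Fintype.card_fin]

end main

section counting

lemma ptset_card {n m d : ℕ} :
    Nat.card {p : Finset (Fin n) × Fin n //
        (p.1.card = m ∧ GoodPred n d p.1) ∧ p.2 ∈ p.1}
      = Nat.card {I : Finset (Fin n) // I.card = m ∧ GoodPred n d I} * m := by
  classical
  let S := {I : Finset (Fin n) // I.card = m ∧ GoodPred n d I}
  have e1 : {p : Finset (Fin n) × Fin n //
        (p.1.card = m ∧ GoodPred n d p.1) ∧ p.2 ∈ p.1}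
      ≃ Σ I : S, {y // y ∈ I.1} :=
    { toFun := fun p => ⟨⟨p.1.1, p.2.1⟩, ⟨p.1.2, p.2.2⟩⟩
      invFun := fun s => ⟨(s.1.1, s.2.1), s.1.2, s.2.2⟩
      left_inv := fun p => rfl
      right_inv := fun s => rfl }
  have e2 : (Σ I : S, {y // y ∈ I.1}) ≃ Σ _ : S, Fin m :=
    Equiv.sigmaCongrRight fun I =>
      Fintype.equivFinOfCardEq (by rw [Fintype.card_coe]; exact I.2.1)
  have e3 : (Σ _ : S, Fin m) ≃ S × Fin m := Equiv.sigmaEquivProd S (Fin m)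
  rw [Nat.card_congr ((e1.trans e2).trans e3), Nat.card_prod]
  simp [Nat.card_eq_fintype_card]
  exact Or.inl (Fintype.card_congr (Equiv.refl _))

lemma card_fixed_sum (m M : ℕ) :
    Nat.card {g : Fin m → ℕ // ∑ i, g i = M} = (m + M - 1).choose M := by
  classical
  have e1 : {g : Fin m → ℕ // ∑ i, g i = M} ≃ {h : Fin m →₀ ℕ // ∑ i, h i = M} :=
    Equiv.subtypeEquiv Finsupp.equivFunOnFinite.symm (by
      intro g
      have h2 : ∀ i, (Finsupp.equivFunOnFinite.symm g) i = g i := fun i => rfl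
      simp [h2])
  have e2 : {h : Fin m →₀ ℕ // ∑ i, h i = M}
      ≃ {μ : Multiset (Fin m) // Multiset.card μ = M} :=
    Equiv.subtypeEquiv Multiset.toFinsupp.symm.toEquiv (by
      intro h
      show (∑ i, h i = M) ↔ Multiset.card (Finsupp.toMultiset h) = M
      rw [Finsupp.card_toMultiset, Finsupp.sum_fintype]
      · rfl
      · intro i; rfl)
  have e3 : {μ : Multiset (Fin m) // Multiset.card μ = M} ≃ Sym (Fin m) M := Equiv.refl _
  rw [Nat.card_congr ((e1.trans e2).trans e3), Nat.card_eq_fintype_card,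
    Sym.card_sym_eq_choose, Fintype.card_fin]

end counting

lemma comp_card (n d r : ℕ) (hn : 0 < n) (hne : Even n) (hr : 1 ≤ r) :
    Nat.card {f : Fin (2 * r) → ℕ //
        (∑ i, f i = n) ∧ ∀ i, Odd (f i) ∧ 2 * d + 3 ≤ f i}
      = (n / 2 - (2 * d + 1) * r - 1).choose (2 * r - 1) := by
  obtain ⟨k, hk⟩ := hne
  by_cases hbig : 2 * r * (2 * d + 3) ≤ n
  · obtain ⟨M, hM⟩ : ∃ M, M = n / 2 - (2 * d + 3) * r := ⟨_, rfl⟩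
    have hA : 2 * r * (2 * d + 3) = 2 * ((2 * d + 3) * r) := by ring
    have hB : (2 * d + 3) * r = (2 * d + 1) * r + 2 * r := by ring
    have hMeq : 2 * M + 2 * r * (2 * d + 3) = n := by omega
    have key : Nat.card {g : Fin (2 * r) → ℕ // ∑ i, g i = M}
        = Nat.card {f : Fin (2 * r) → ℕ //
            (∑ i, f i = n) ∧ ∀ i, Odd (f i) ∧ 2 * d + 3 ≤ f i} := by
      apply Nat.card_eq_of_bijective (fun g =>
        ⟨fun i => 2 * g.1 i + (2 * d + 3), by
          rw [Finset.sum_add_distrib, Finset.sum_const, Finset.card_univ, Fintype.card_fin,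
            ← Finset.mul_sum, g.2, smul_eq_mul]
          omega, fun i => ⟨⟨g.1 i + d + 1, by ring⟩, Nat.le_add_left _ _⟩⟩)
      constructor
      · intro g g' h
        apply Subtype.ext; funext i
        have h2 := congrFun (congrArg Subtype.val h) i
        simp only at h2
        omega
      · rintro ⟨f, hsum, hcond⟩
        have hfe : ∀ i, 2 * ((f i - (2 * d + 3)) / 2) + (2 * d + 3) = f i := by
          intro i
          obtain ⟨t, ht⟩ := (hcond i).1
          have := (hcond i).2
          omega
        refine ⟨⟨fun i => (f i - (2 * d + 3)) / 2, ?_⟩, ?_⟩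
        · have e1 : ∑ i, (2 * ((f i - (2 * d + 3)) / 2) + (2 * d + 3)) = n := by
            rw [Finset.sum_congr rfl fun i _ => hfe i, hsum]
          rw [Finset.sum_add_distrib, Finset.sum_const, Finset.card_univ, Fintype.card_fin,
            ← Finset.mul_sum, smul_eq_mul] at e1
          show ∑ i, (f i - (2 * d + 3)) / 2 = M
          omega
        · apply Subtype.ext; funext i; exact hfe i
    rw [← key, card_fixed_sum]
    clear key
    have h1 : n / 2 - (2 * d + 1) * r - 1 = M + 2 * r - 1 := by omega
    rw [h1, (show M + 2 * r - 1 = 2 * r + M - 1 by omega),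
      (show 2 * r - 1 = 2 * r + M - 1 - M by omega)]
    exact (Nat.choose_symm (show M ≤ 2 * r + M - 1 by omega)).symm
  · have he : IsEmpty {f : Fin (2 * r) → ℕ //
        (∑ i, f i = n) ∧ ∀ i, Odd (f i) ∧ 2 * d + 3 ≤ f i} := by
      refine ⟨fun p => ?_⟩
      obtain ⟨f, hsum, hcond⟩ := p
      have h2 : ∑ i : Fin (2 * r), (2 * d + 3) ≤ ∑ i, f i :=
        Finset.sum_le_sum fun i _ => (hcond i).2
      rw [Finset.sum_const, Finset.card_univ, Fintype.card_fin, smul_eq_mul, hsum] at h2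
      omega
    rw [Nat.card_of_isEmpty]
    have hA : 2 * r * (2 * d + 3) = 2 * ((2 * d + 1) * r) + 2 * (2 * r) := by ring
    exact (Nat.choose_eq_zero_of_lt (by omega)).symm

/-- Fix `n` even positive, `d ≥ 1` and `r ≥ 1`. The number of subsets
`I` of `ℤ/nℤ` with `|I| = 2r` such that the clockwise distance from each element of `I`
to its successor in `I` is odd and at least `2d+3` equals
`(n/(2r))·C(n/2 − (2d+1)r − 1, 2r − 1)`. -/
theorem stmt12 (n d r : ℕ) (hn : 0 < n) (hne : Even n) (hd : 1 ≤ d) (hr : 1 ≤ r) :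
    (Set.ncard {I : Finset (Fin n) | I.card = 2 * r ∧
        ∀ x ∈ I, ∀ y ∈ I, x ≠ y →
          (∀ z ∈ I, z ≠ x → rhoPlus n x y ≤ rhoPlus n x z) →
          Odd (rhoPlus n x y) ∧ 2 * d + 3 ≤ rhoPlus n x y} : ℝ) =
      (n : ℝ) / (2 * r) * (Nat.choose (n / 2 - (2 * d + 1) * r - 1) (2 * r - 1)) := by
  haveI : NeZero n := ⟨hn.ne'⟩
  have hm : 2 ≤ 2 * r := by omega
  have h1 := main_count (n := n) (m := 2 * r) (d := d) hm
  have h2 := ptset_card (n := n) (m := 2 * r) (d := d)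
  have h3 := comp_card n d r hn hne hr
  have h4 : Set.ncard {I : Finset (Fin n) | I.card = 2 * r ∧
        ∀ x ∈ I, ∀ y ∈ I, x ≠ y →
          (∀ z ∈ I, z ≠ x → rhoPlus n x y ≤ rhoPlus n x z) →
          Odd (rhoPlus n x y) ∧ 2 * d + 3 ≤ rhoPlus n x y}
      = Nat.card {I : Finset (Fin n) // I.card = 2 * r ∧ GoodPred n d I} := by
    rw [← Nat.card_coe_set_eq]
    exact Nat.card_congr (Equiv.subtypeEquivRight fun I => Iff.rfl)
  have key : Nat.card {I : Finset (Fin n) // I.card = 2 * r ∧ GoodPred n d I} * (2 * r)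
      = n * (n / 2 - (2 * d + 1) * r - 1).choose (2 * r - 1) := by
    rw [← h2, h1, h3]
  rw [h4]
  have hkeyR : (Nat.card {I : Finset (Fin n) // I.card = 2 * r ∧ GoodPred n d I} : ℝ)
      * (2 * (r : ℝ)) = (n : ℝ) * ((n / 2 - (2 * d + 1) * r - 1).choose (2 * r - 1) : ℝ) := by
    exact_mod_cast congrArg (fun t : ℕ => (t : ℝ)) key
  have hr' : (0 : ℝ) < 2 * (r : ℝ) := by
    have : (1 : ℝ) ≤ (r : ℝ) := by exact_mod_cast hr
    linarith
  rw [div_mul_eq_mul_div, eq_div_iff (ne_of_gt hr')]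
  linarith [hkeyR]
end

section
/- Fix d ≥ 1 and let λ = λ(d) be the unique positive solution of λ^{d−1/2}(λ−2) = 1. Then there exists a constant C(d) > 0 such that |Hom(P_{n,d},0)| = C(d)·λ^{n/2}·(1+o(1)) as n → ∞. -/
open Filter
open Finset


def bval (b : Bool) : ℤ := if b then 1 else -1

lemma bval_abs (b : Bool) : |bval b| = 1 := by cases b <;> simp [bval]

lemma bval_inj : Function.Injective bval := by
  intro a b h; cases a <;> cases b <;> simp_all [bval]

def toF (w : List Bool) (i : ℕ) : ℤ := ((w.take i).map bval).sum

lemma toF_zero (w : List Bool) : toF w 0 = 0 := by simp [toF]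

lemma toF_succ (w : List Bool) (i : ℕ) (h : i < w.length) :
    toF w (i+1) = toF w i + bval w[i] := by
  rw [toF, toF]
  have h' : i < (w.map bval).length := by simpa using h
  have := List.sum_take_succ (w.map bval) i h'
  simpa using this




/-- automaton path count: `cnt d m s` = number of valid continuations of length `m`
from state `s` (distance since last repeat). -/
def cnt (d : ℕ) : ℕ → ℕ → ℕ
  | 0, _ => 1
  | (m+1), s => cnt d m (s+1) + (if Even s ∨ 2*d+1 ≤ s then cnt d m 1 else 0)

lemma cnt_pos (d m s : ℕ) : 0 < cnt d m s := by
  induction m generalizing s with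
  | zero => simp [cnt]
  | succ m ih =>
    simp only [cnt]
    have h1 := ih (s+1)
    split <;> omega

/-- stabilization -/
lemma cnt_stab (d : ℕ) : ∀ m s, 2*d+1 ≤ s → cnt d m s = cnt d m (2*d+1) := by
  intro m
  induction m with
  | zero => intro s _; rfl
  | succ m ih =>
    intro s hs
    have h1 : cnt d (m+1) s = cnt d m (s+1) + cnt d m 1 := by
      simp only [cnt, if_pos (Or.inr hs)]
    have h2 : cnt d (m+1) (2*d+1) = cnt d m (2*d+2) + cnt d m 1 := by
      simp only [cnt, if_pos (Or.inr (le_refl _))]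
    rw [h1, h2, ih (s+1) (by omega), ih (2*d+2) (by omega)]

lemma cnt_step (d m : ℕ) : cnt d (m+1) (2*d+1) = cnt d m (2*d+1) + cnt d m 1 := by
  simp only [cnt, if_pos (Or.inr (le_refl _)), cnt_stab d m (2*d+1+1) (by omega)]

/-- telescoping -/
lemma cnt_tel (d m : ℕ) : ∀ t, cnt d (m+t) (2*d+1) = cnt d m (2*d+1) + ∑ i ∈ range t, cnt d (m+i) 1 := by
  intro t
  induction t with
  | zero => simp
  | succ t ih =>
    rw [show m + (t+1) = (m+t)+1 by ring, cnt_step, ih, sum_range_succ]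
    ring

/-- chain unrolling (Lemma A) -/
lemma cnt_chain (d m : ℕ) : ∀ t, t ≤ 2*d →
    cnt d (m+t) (2*d+1-t) = cnt d m (2*d+1) + ∑ i ∈ range t, (if Even i then cnt d (m+i) 1 else 0) := by
  intro t
  induction t with
  | zero => simp
  | succ t ih =>
    intro ht
    have hlt : ¬ (2*d+1 ≤ 2*d+1-(t+1)) := by omega
    have hs : 2*d+1-(t+1)+1 = 2*d+1-t := by omega
    have heq : (Even (2*d+1-(t+1))) ↔ Even t := by
      rw [Nat.even_sub (by omega)]; simp [Nat.even_add_one, parity_simps]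
    rw [show m + (t+1) = (m+t)+1 by ring]
    simp only [cnt, hs, hlt, or_false]
    rw [ih (by omega), sum_range_succ]
    by_cases he : Even t
    · rw [if_pos (heq.mpr he), if_pos he]; ring
    · rw [if_neg (fun h => he (heq.mp h)), if_neg he]; ring

/-- key: u(m+2d) = F m + sum of evens -/
lemma cnt_u (d m : ℕ) (hd : 1 ≤ d) :
    cnt d (m+2*d) 1 = cnt d m (2*d+1) + ∑ i ∈ range (2*d), (if Even i then cnt d (m+i) 1 else 0) := by
  have := cnt_chain d m (2*d) (le_refl _)
  rwa [show 2*d+1-2*d = 1 by omega] at this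

/-- merge of even and odd sums -/
lemma sum_merge (d m : ℕ) (v : ℕ → ℕ) :
    ∑ i ∈ range (2*d), (if Even i then v (m+i) else 0)
      + ∑ i ∈ range (2*d), (if Even i then v (m+1+i) else 0)
    = ∑ i ∈ range (2*d), v (m+i) := by
  induction d with
  | zero => simp
  | succ d ih =>
    have h2 : 2*(d+1) = (2*d)+1+1 := by ring
    rw [h2, sum_range_succ, sum_range_succ, sum_range_succ, sum_range_succ, sum_range_succ, sum_range_succ]
    rw [if_pos (by simp [Nat.even_add_one, parity_simps] : Even (2*d)),
        if_neg (by simp [Nat.even_add_one, parity_simps] : ¬ Even (2*d+1)),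
        if_pos (by simp [Nat.even_add_one, parity_simps] : Even (2*d)),
        if_neg (by simp [Nat.even_add_one, parity_simps] : ¬ Even (2*d+1))]
    have : m + 1 + (2*d) = m + (2*d+1) := by ring
    rw [this]
    omega

/-- main recurrence for `F m = cnt d m (2d+1)` -/
lemma cnt_main (d : ℕ) (hd : 1 ≤ d) (m : ℕ) :
    cnt d (m+2*d+2) (2*d+1) = 2 * cnt d (m+2*d) (2*d+1) + cnt d (m+1) (2*d+1) := by
  have h1 : cnt d (m+2*d+2) (2*d+1) = cnt d (m+2*d+1) (2*d+1) + cnt d (m+2*d+1) 1 := by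
    have := cnt_step d (m+2*d+1); rwa [show m+2*d+1+1 = m+2*d+2 by ring] at this
  have h2 : cnt d (m+2*d+1) (2*d+1) = cnt d (m+2*d) (2*d+1) + cnt d (m+2*d) 1 := by
    have := cnt_step d (m+2*d); rwa [show m+2*d+1 = m+2*d+1 by ring] at this
  have h3 : cnt d (m+2*d) 1 = cnt d m (2*d+1) + ∑ i ∈ range (2*d), (if Even i then cnt d (m+i) 1 else 0) :=
    cnt_u d m hd
  have h4 : cnt d (m+2*d+1) 1 = cnt d (m+1) (2*d+1) + ∑ i ∈ range (2*d), (if Even i then cnt d (m+1+i) 1 else 0) := by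
    have := cnt_u d (m+1) hd; rwa [show m+1+2*d = m+2*d+1 by ring] at this
  have h5 : ∑ i ∈ range (2*d), (if Even i then cnt d (m+i) 1 else 0)
      + ∑ i ∈ range (2*d), (if Even i then cnt d (m+1+i) 1 else 0)
      = ∑ i ∈ range (2*d), cnt d (m+i) 1 := by
    simpa using sum_merge d m (fun j => cnt d j 1)
  have h6 : cnt d (m+2*d) (2*d+1) = cnt d m (2*d+1) + ∑ i ∈ range (2*d), cnt d (m+i) 1 :=
    cnt_tel d m (2*d)
  linarith

section
variable (d : ℕ)

def Vp : Bool → ℕ → List Bool → Prop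
  | _, _, [] => True
  | c, s, (b :: t) => if b = c then ((Even s ∨ 2*d+1 ≤ s) ∧ Vp b 1 t) else Vp b (s+1) t

open Classical in
/-- Finset of valid continuations of length m from state (c,s). -/
noncomputable def WS : ℕ → Bool → ℕ → Finset (List Bool)
  | 0, _, _ => {[]}
  | (m+1), c, s =>
      (if Even s ∨ 2*d+1 ≤ s then (WS m c 1).image (c :: ·) else ∅)
      ∪ (WS m (!c) (s+1)).image ((!c) :: ·)

lemma mem_WS : ∀ (m : ℕ) (c : Bool) (s : ℕ) (t : List Bool),
    t ∈ WS d m c s ↔ (t.length = m ∧ Vp d c s t) := by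
  intro m
  induction m with
  | zero =>
    intro c s t
    simp only [WS, mem_singleton]
    constructor
    · rintro rfl; exact ⟨rfl, trivial⟩
    · rintro ⟨h, -⟩; exact List.length_eq_zero_iff.mp h
  | succ m ih =>
    intro c s t
    simp only [WS, mem_union]
    constructor
    · rintro (h | h)
      · rcases Classical.em (Even s ∨ 2*d+1 ≤ s) with hc | hc
        · rw [if_pos hc, mem_image] at h
          obtain ⟨t', ht', rfl⟩ := h
          obtain ⟨hl, hv⟩ := (ih c 1 t').mp ht'
          exact ⟨by simp [hl], by simp only [Vp, if_pos rfl]; exact ⟨hc, hv⟩⟩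
        · rw [if_neg hc] at h; exact absurd h (notMem_empty _)
      · rw [mem_image] at h
        obtain ⟨t', ht', rfl⟩ := h
        obtain ⟨hl, hv⟩ := (ih (!c) (s+1) t').mp ht'
        refine ⟨by simp [hl], ?_⟩
        simp only [Vp, if_neg (by simp : ¬ ((!c) = c))]
        exact hv
    · rintro ⟨hl, hv⟩
      match t with
      | [] => simp at hl
      | b :: t' =>
        simp only [List.length_cons, Nat.succ_inj] at hl
        by_cases hb : b = c
        · subst hb
          simp only [Vp, if_pos rfl] at hv
          left
          rw [if_pos hv.1, mem_image]
          exact ⟨t', (ih b 1 t').mpr ⟨hl, hv.2⟩, rfl⟩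
        · right
          simp only [Vp, if_neg hb] at hv
          rw [mem_image]
          have hb' : b = !c := by cases b <;> cases c <;> simp_all
          subst hb'
          exact ⟨t', (ih (!c) (s+1) t').mpr ⟨hl, hv⟩, rfl⟩

lemma WS_card : ∀ (m : ℕ) (c : Bool) (s : ℕ), (WS d m c s).card = cnt d m s := by
  intro m
  induction m with
  | zero => intro c s; simp [WS, cnt]
  | succ m ih =>
    intro c s
    have hdisj : ∀ (A : Finset (List Bool)),
        (A.image (c :: ·)) ∩ ((WS d m (!c) (s+1)).image ((!c) :: ·)) = ∅ := by
      intro A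
      rw [Finset.eq_empty_iff_forall_notMem]
      intro a ha
      rw [mem_inter, mem_image, mem_image] at ha
      obtain ⟨⟨t1, -, rfl⟩, ⟨t2, -, he⟩⟩ := ha
      simp at he
    simp only [WS, cnt]
    by_cases hc : Even s ∨ 2*d+1 ≤ s
    · rw [if_pos hc, if_pos hc,
        card_union_of_disjoint (disjoint_iff_inter_eq_empty.mpr (hdisj _)),
        card_image_of_injective _ (List.cons_injective),
        card_image_of_injective _ (List.cons_injective), ih, ih]
      ring
    · rw [if_neg hc, if_neg hc, empty_union,
        card_image_of_injective _ (List.cons_injective), ih]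
      ring

/-- repeat at position i -/
def RepA (w : List Bool) (i : ℕ) : Prop := i + 2 ≤ w.length ∧ w[i]? = w[i+1]?

/-- pairwise condition: repeats at odd distance are ≥ 2d+1 apart -/
def PW (w : List Bool) : Prop :=
  ∀ i t : ℕ, RepA w i → RepA w (i+(2*t+1)) → 2*d+1 ≤ 2*t+1

/-- virtual repeat at distance s before the start -/
def PV (s : ℕ) (w : List Bool) : Prop :=
  ∀ j : ℕ, RepA w j → Odd (j+s) → 2*d+1 ≤ j+s

lemma repA_cons_succ (x : Bool) (w : List Bool) (i : ℕ) :
    RepA (x :: w) (i+1) ↔ RepA w i := by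
  simp [RepA, List.getElem?_cons_succ]

lemma repA_cons_zero (c b : Bool) (t : List Bool) :
    RepA (c :: b :: t) 0 ↔ b = c := by
  simp [RepA]
  exact eq_comm

lemma pw_cons_iff (c b : Bool) (t' : List Bool) :
    PW d (c :: b :: t') ↔ (PW d (b :: t') ∧ (b = c → ∀ u, RepA (b :: t') (2*u) → 2*d+1 ≤ 2*u+1)) := by
  constructor
  · intro h
    refine ⟨fun i u h1 h2 => ?_, fun hbc u h2 => ?_⟩
    · refine h (i+1) u ((repA_cons_succ ..).mpr h1) ?_
      rw [show i+1+(2*u+1) = (i+(2*u+1))+1 by ring]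
      exact (repA_cons_succ ..).mpr h2
    · refine h 0 u ((repA_cons_zero ..).mpr hbc) ?_
      rw [show 0+(2*u+1) = (2*u)+1 by ring]
      exact (repA_cons_succ ..).mpr h2
  · rintro ⟨h1, h2⟩ i u hi hj
    match i with
    | 0 =>
      refine h2 ((repA_cons_zero ..).mp hi) u ?_
      rw [show 0+(2*u+1) = (2*u)+1 by ring] at hj
      exact (repA_cons_succ ..).mp hj
    | (i+1) =>
      refine h1 i u ((repA_cons_succ ..).mp hi) ?_
      rw [show i+1+(2*u+1) = (i+(2*u+1))+1 by ring] at hj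
      exact (repA_cons_succ ..).mp hj

lemma pv_cons_iff (c b : Bool) (t' : List Bool) (s : ℕ) :
    PV d s (c :: b :: t') ↔ ((b = c → Odd s → 2*d+1 ≤ s) ∧ PV d (s+1) (b :: t')) := by
  constructor
  · intro h
    refine ⟨fun hbc hodd => ?_, fun j hrep hodd => ?_⟩
    · have := h 0 ((repA_cons_zero ..).mpr hbc) (by simpa using hodd)
      omega
    · have := h (j+1) ((repA_cons_succ ..).mpr hrep) (by rw [show j+1+s = j+(s+1) by ring]; exact hodd)
      omega
  · rintro ⟨h0, h1⟩ j hrep hodd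
    match j with
    | 0 =>
      have := h0 ((repA_cons_zero ..).mp hrep) (by simpa using hodd)
      omega
    | (j+1) =>
      have := h1 j ((repA_cons_succ ..).mp hrep) (by rw [show j+(s+1) = j+1+s by ring]; exact hodd)
      omega

lemma Vp_iff : ∀ (t : List Bool) (c : Bool) (s : ℕ),
    Vp d c s t ↔ (PW d (c :: t) ∧ PV d s (c :: t)) := by
  intro t
  induction t with
  | nil =>
    intro c s
    have h1 : PW d [c] := by
      intro i u hi _
      have := hi.1
      simp [List.length] at this
    have h2 : PV d s [c] := by
      intro j hj _
      have := hj.1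
      simp [List.length] at this
    simp [Vp, h1, h2]
  | cons b t' ih =>
    intro c s
    rw [pw_cons_iff, pv_cons_iff]
    by_cases hbc : b = c
    · subst hbc
      simp only [Vp, if_pos rfl, ih b 1, forall_const]
      constructor
      · rintro ⟨hcond, hpw2, hpv1⟩
        refine ⟨⟨hpw2, fun u h2 => hpv1 (2*u) h2 ⟨u, by ring⟩⟩, ?_, ?_⟩
        · intro hodd
          rcases hcond with he | hge
          · exact absurd hodd (Nat.not_odd_iff_even.mpr he)
          · exact hge
        · intro j hrep hodd
          rcases hcond with he | hge
          · obtain ⟨k, hk⟩ := he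
            obtain ⟨m, hm⟩ := hodd
            have hj1 : j + 1 = 2*(m-k) + 1 := by omega
            have := hpv1 j hrep ⟨m-k, hj1⟩
            omega
          · omega
      · rintro ⟨⟨hpw2, hc0⟩, hodds, hpvs1⟩
        refine ⟨?_, hpw2, ?_⟩
        · rcases Nat.even_or_odd s with he | ho
          · exact Or.inl he
          · exact Or.inr (hodds ho)
        · intro j hrep hoddj1
          obtain ⟨u, hu⟩ : ∃ u, j = 2*u := by
            rcases hoddj1 with ⟨m, hm⟩; exact ⟨m, by omega⟩
          have := hc0 u (hu ▸ hrep)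
          omega
    · have hVp : Vp d c s (b :: t') = Vp d b (s+1) t' := by
        simp only [Vp, if_neg hbc]
      rw [hVp, ih b (s+1)]
      simp [hbc]

noncomputable def Wn : ℕ → Finset (List Bool)
  | 0 => {[]}
  | (n+1) => (WS d n true (2*d+1)).image (true :: ·) ∪ (WS d n false (2*d+1)).image (false :: ·)

lemma pv_top (w : List Bool) : PV d (2*d+1) w := fun _ _ _ => by omega

lemma pw_nil : PW d [] := by
  intro i u hi _
  have := hi.1
  simp [List.length] at this

lemma pw_singleton (b : Bool) : PW d [b] := by
  intro i u hi _
  have := hi.1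
  simp [List.length] at this

lemma mem_Wn (n : ℕ) (w : List Bool) : w ∈ Wn d n ↔ (w.length = n ∧ PW d w) := by
  match n with
  | 0 =>
    simp only [Wn, mem_singleton]
    constructor
    · rintro rfl; exact ⟨rfl, pw_nil d⟩
    · rintro ⟨h, -⟩; exact List.length_eq_zero_iff.mp h
  | (n+1) =>
    simp only [Wn, mem_union, mem_image]
    constructor
    · rintro (⟨t, ht, rfl⟩ | ⟨t, ht, rfl⟩) <;>
      · obtain ⟨hl, hv⟩ := (mem_WS d n _ _ t).mp ht
        exact ⟨by simp [hl], ((Vp_iff d t _ _).mp hv).1⟩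
    · rintro ⟨hl, hpw⟩
      match w with
      | [] => simp at hl
      | (b :: t) =>
        simp only [List.length_cons, Nat.succ_inj] at hl
        have hv : Vp d b (2*d+1) t := (Vp_iff d t b (2*d+1)).mpr ⟨hpw, pv_top d _⟩
        cases b
        · exact Or.inr ⟨t, (mem_WS d n _ _ t).mpr ⟨hl, hv⟩, rfl⟩
        · exact Or.inl ⟨t, (mem_WS d n _ _ t).mpr ⟨hl, hv⟩, rfl⟩

lemma card_Wn (n : ℕ) : (Wn d (n+1)).card = 2 * cnt d n (2*d+1) := by
  have hdisj : Disjoint ((WS d n true (2*d+1)).image (true :: ·))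
      ((WS d n false (2*d+1)).image (false :: ·)) := by
    rw [Finset.disjoint_left]
    rintro a ha hb
    rw [mem_image] at ha hb
    obtain ⟨t1, -, rfl⟩ := ha
    obtain ⟨t2, -, he⟩ := hb
    simp at he
  rw [Wn, card_union_of_disjoint hdisj,
    card_image_of_injective _ (List.cons_injective),
    card_image_of_injective _ (List.cons_injective), WS_card, WS_card]
  ring

def stepOK (n : ℕ) (g : ℕ → ℤ) : Prop := ∀ i, i + 1 ≤ n → |g (i+1) - g i| = 1
def winOK (n : ℕ) (g : ℕ → ℤ) : Prop :=
  ∀ a k, 1 ≤ k → k ≤ d → a + (2*k+1) ≤ n → |g (a + (2*k+1)) - g a| = 1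
def gapOK (n : ℕ) (g : ℕ → ℤ) : Prop :=
  ∀ i t, i + (2*t+1) + 2 ≤ n → g (i+2) ≠ g i → g (i+(2*t+1)+2) ≠ g (i+(2*t+1)) →
    2*d+1 ≤ 2*t+1

/-- combined window statement including k = 0 -/
lemma winAux {n : ℕ} {g : ℕ → ℤ} (hs : stepOK n g) (hw : winOK d n g) :
    ∀ k a, k ≤ d → a + (2*k+1) ≤ n → |g (a + (2*k+1)) - g a| = 1 := by
  intro k a hk hle
  match k with
  | 0 => simpa using hs a (by omega)
  | (k+1) => exact hw a (k+1) (by omega) hk hle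

/-- two steps: difference over distance 2 is 0 or ±2 -/
lemma two_step {n : ℕ} {g : ℕ → ℤ} (hs : stepOK n g) (i : ℕ) (h : i + 2 ≤ n) :
    g (i+2) - g i = 0 ∨ g (i+2) - g i = 2 ∨ g (i+2) - g i = -2 := by
  have h1 := hs i (by omega)
  have h2 := hs (i+1) (by omega)
  rw [show i+1+1 = i+2 by ring] at h2
  rcases (abs_eq (by norm_num : (0:ℤ) ≤ 1)).mp h1 with e1 | e1 <;>
  rcases (abs_eq (by norm_num : (0:ℤ) ≤ 1)).mp h2 with e2 | e2 <;> omega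

/-- WIN → GAP -/
lemma thmA1 {n : ℕ} {g : ℕ → ℤ} (hd : 1 ≤ d) (hs : stepOK n g) (hw : winOK d n g) :
    gapOK d n g := by
  intro i t hle hri hrj
  by_contra hlt
  have ht : t + 1 ≤ d := by omega
  match t with
  | 0 =>
    have h1 := hs i (by omega)
    have h2 := hs (i+1) (by omega)
    have h3 := hs (i+2) (by omega)
    rw [show i+1+1 = i+2 by ring] at h2
    rw [show i+2+1 = i+3 by ring] at h3
    have w0 : |g (i+3) - g i| = 1 := by
      have := winAux d hs hw 1 i (by omega) (by omega)
      rwa [show i+(2*1+1) = i+3 by ring] at this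
    rw [show i+(2*0+1)+2 = i+3 by ring, show i+(2*0+1) = i+1 by ring] at hrj
    rcases (abs_eq (by norm_num : (0:ℤ) ≤ 1)).mp h1 with e1 | e1 <;>
    rcases (abs_eq (by norm_num : (0:ℤ) ≤ 1)).mp h2 with e2 | e2 <;>
    rcases (abs_eq (by norm_num : (0:ℤ) ≤ 1)).mp h3 with e3 | e3 <;>
    rcases (abs_eq (by norm_num : (0:ℤ) ≤ 1)).mp w0 with e4 | e4 <;> omega
  | (t'+1) =>
  set t := t' + 1 with htdef
  have ha2 : g (i+2) - g i = 2 ∨ g (i+2) - g i = -2 := by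
    rcases two_step hs i (by omega) with h | h | h
    · exact absurd (by omega : g (i+2) = g i) hri
    · exact Or.inl h
    · exact Or.inr h
  have hb2 : g (i+(2*t+1)+2) - g (i+(2*t+1)) = 2 ∨ g (i+(2*t+1)+2) - g (i+(2*t+1)) = -2 := by
    rcases two_step hs (i+(2*t+1)) (by omega) with h | h | h
    · exact absurd (by omega : g (i+(2*t+1)+2) = g (i+(2*t+1))) hrj
    · exact Or.inl h
    · exact Or.inr h
  -- four windows
  have w1 : |g (i+(2*t+1)) - g i| = 1 := winAux d hs hw t i (by omega) (by omega)
  have w2 : |g (i+(2*t+1)) - g (i+2)| = 1 := by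
    have := winAux d hs hw t' (i+2) (by omega) (by omega)
    rwa [show i+2+(2*t'+1) = i+(2*t+1) by omega] at this
  have w3 : |g (i+(2*t+1)+2) - g i| = 1 := by
    have := winAux d hs hw (t+1) i (by omega) (by omega)
    rwa [show i+(2*(t+1)+1) = i+(2*t+1)+2 by omega] at this
  have w4 : |g (i+(2*t+1)+2) - g (i+2)| = 1 := by
    have := winAux d hs hw t (i+2) (by omega) (by omega)
    rwa [show i+2+(2*t+1) = i+(2*t+1)+2 by omega] at this
  rcases (abs_eq (by norm_num : (0:ℤ) ≤ 1)).mp w1 with e1 | e1 <;>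
  rcases (abs_eq (by norm_num : (0:ℤ) ≤ 1)).mp w2 with e2 | e2 <;>
  rcases (abs_eq (by norm_num : (0:ℤ) ≤ 1)).mp w3 with e3 | e3 <;>
  rcases (abs_eq (by norm_num : (0:ℤ) ≤ 1)).mp w4 with e4 | e4 <;> omega

/-- GAP → WIN (together with STEP) -/
lemma thmA2 {n : ℕ} {g : ℕ → ℤ} (hs : stepOK n g) (hg : gapOK d n g) :
    ∀ k a, k ≤ d → a + (2*k+1) ≤ n → |g (a + (2*k+1)) - g a| = 1 := by
  intro k
  induction k with
  | zero => intro a _ hle; simpa using hs a (by omega)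
  | succ k ih =>
    intro a hk hle
    by_cases hra : g (a+2) = g a
    · have := ih (a+2) (by omega) (by omega)
      rw [show a+2+(2*k+1) = a+(2*(k+1)+1) by ring, hra] at this
      exact this
    · by_cases hrb : g ((a+(2*k+1))+2) = g (a+(2*k+1))
      · have := ih a (by omega) (by omega)
        rw [show (a+(2*k+1))+2 = a+(2*(k+1)+1) by ring] at hrb
        rw [← hrb] at this
        exact this
      · have := hg a k (by omega) hra hrb
        omega

end

section
variable (d : ℕ)

lemma toF_step (w : List Bool) : stepOK w.length (toF w) := by
  intro i h
  rw [toF_succ w i (by omega)]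
  simp [bval_abs]

lemma rep_bridge (w : List Bool) (i : ℕ) (h : i + 2 ≤ w.length) :
    (toF w (i+2) ≠ toF w i) ↔ w[i]? = w[i+1]? := by
  have h1 : toF w (i+2) = toF w (i+1) + bval (w[i+1]'(by omega)) := by
    exact toF_succ w (i+1) (by omega)
  have h2 : toF w (i+1) = toF w i + bval (w[i]'(by omega)) := toF_succ w i (by omega)
  rw [h1, h2, List.getElem?_eq_getElem (by omega : i < w.length),
    List.getElem?_eq_getElem (by omega : i+1 < w.length)]
  constructor
  · intro hne
    by_contra hne2
    apply hne
    have : (w[i]'(by omega)) ≠ (w[i+1]'(by omega)) := fun he => hne2 (by rw [he])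
    revert this
    cases (w[i]'(by omega)) <;> cases (w[i+1]'(by omega)) <;> simp [bval] <;> ring
  · intro he
    have : (w[i]'(by omega)) = (w[i+1]'(by omega)) := by simpa using he
    rw [this]
    cases (w[i+1]'(by omega)) <;> simp [bval] <;> omega

lemma gap_pw (w : List Bool) : gapOK d w.length (toF w) ↔ PW d w := by
  constructor
  · intro h i t h1 h2
    have hb2 : i + (2*t+1) + 2 ≤ w.length := h2.1
    exact h i t hb2 ((rep_bridge w i h1.1).mpr h1.2) ((rep_bridge w _ hb2).mpr h2.2)
  · intro h i t hle hra hrb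
    exact h i t ⟨by omega, (rep_bridge w i (by omega)).mp hra⟩
      ⟨hle, (rep_bridge w _ hle).mp hrb⟩

end

section
variable (d : ℕ)

def listToFun (n : ℕ) (w : List Bool) : Fin (n+1) → ℤ := fun i => toF w i.val

lemma phom_of_word (n : ℕ) (w : List Bool) (hw : w ∈ Wn d n) :
    PHom n d (listToFun n w) := by
  obtain ⟨hlen, hpw⟩ := (mem_Wn d n w).mp hw
  have hstep : stepOK n (toF w) := hlen ▸ toF_step w
  have hgap : gapOK d n (toF w) := hlen ▸ ((gap_pw d w).mpr hpw)
  have hwin := thmA2 d hstep hgap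
  constructor
  · show toF w ((0 : Fin (n+1)) : ℕ) = 0
    rw [Fin.val_zero, toF_zero]
  · rintro i j ⟨k, hk, habs⟩
    rcases (abs_eq (by positivity : (0:ℤ) ≤ 2*(k:ℤ)+1)).mp habs with he | he
    · have hij : (i : ℕ) = (j : ℕ) + (2*k+1) := by omega
      have hle : (j : ℕ) + (2*k+1) ≤ n := by omega
      have := hwin k j hk hle
      show |toF w (i:ℕ) - toF w (j:ℕ)| = 1
      rw [hij]
      exact this
    · have hij : (j : ℕ) = (i : ℕ) + (2*k+1) := by omega
      have hle : (i : ℕ) + (2*k+1) ≤ n := by omega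
      have := hwin k i hk hle
      show |toF w (i:ℕ) - toF w (j:ℕ)| = 1
      rw [hij, abs_sub_comm]
      exact this

lemma word_of_phom (hd : 1 ≤ d) (n : ℕ) (f : Fin (n+1) → ℤ) (hf : PHom n d f) :
    ∃ w ∈ Wn d n, listToFun n w = f := by
  classical
  set w : List Bool := List.ofFn (fun i : Fin n => decide (f i.succ - f i.castSucc = 1)) with hwdef
  have hlen : w.length = n := by simp [hwdef]
  have hget : ∀ i (h : i < n), w[i]'(by omega) = decide (f (⟨i+1, by omega⟩ : Fin (n+1)) - f ⟨i, by omega⟩ = 1) := by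
    intro i h
    simp only [hwdef, List.getElem_ofFn]
    congr 1
  have hstepf : ∀ (i : ℕ) (h : i + 1 ≤ n), |f (⟨i+1, by omega⟩ : Fin (n+1)) - f ⟨i, by omega⟩| = 1 := by
    intro i h
    apply hf.2
    refine ⟨0, by omega, ?_⟩
    show |((i+1 : ℕ) : ℤ) - ((i : ℕ) : ℤ)| = 2*0+1
    push_cast
    norm_num
  have htoF : ∀ i (h : i ≤ n), toF w i = f ⟨i, by omega⟩ := by
    intro i
    induction i with
    | zero =>
      intro h
      rw [toF_zero]
      have h0 := hf.1
      have : (0 : Fin (n+1)) = ⟨0, by omega⟩ := by ext; simp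
      rw [← this]
      exact h0.symm
    | succ i ih =>
      intro h
      rw [toF_succ w i (by omega), ih (by omega), hget i (by omega)]
      by_cases hcase : f (⟨i+1, by omega⟩ : Fin (n+1)) - f ⟨i, by omega⟩ = 1
      · have hdec : decide (f (⟨i+1, by omega⟩ : Fin (n+1)) - f ⟨i, by omega⟩ = 1) = true :=
          decide_eq_true hcase
        rw [hdec]
        simp [bval]
        omega
      · have h1 := hstepf i (by omega)
        have h2 : f (⟨i+1, by omega⟩ : Fin (n+1)) - f ⟨i, by omega⟩ = -1 := by
          rcases (abs_eq (by norm_num : (0:ℤ) ≤ 1)).mp h1 with hx | hx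
          · exact absurd hx hcase
          · exact hx
        have hdec : decide (f (⟨i+1, by omega⟩ : Fin (n+1)) - f ⟨i, by omega⟩ = 1) = false :=
          decide_eq_false hcase
        rw [hdec]
        simp [bval]
        omega
  have hstep : stepOK n (toF w) := by
    intro i h
    rw [htoF (i+1) (by omega), htoF i (by omega)]
    exact hstepf i h
  have hwin : winOK d n (toF w) := by
    intro a k hk1 hkd hle
    rw [htoF (a+(2*k+1)) (by omega), htoF a (by omega)]
    apply hf.2
    refine ⟨k, hkd, ?_⟩
    push_cast
    rw [abs_eq (by positivity : (0:ℤ) ≤ 2*(k:ℤ)+1)]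
    left
    push_cast
    ring
  have hgap : gapOK d n (toF w) := thmA1 d hd hstep hwin
  refine ⟨w, (mem_Wn d n w).mpr ⟨hlen, (gap_pw d w).mp (hlen ▸ hgap)⟩, ?_⟩
  funext i
  show toF w (i : ℕ) = f i
  rw [htoF (i:ℕ) (by omega)]
lemma inj_listToFun (n : ℕ) : Set.InjOn (listToFun n) (Wn d n) := by
  intro w1 hw1 w2 hw2 heq
  obtain ⟨hl1, -⟩ := (mem_Wn d n w1).mp (Finset.mem_coe.mp hw1)
  obtain ⟨hl2, -⟩ := (mem_Wn d n w2).mp (Finset.mem_coe.mp hw2)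
  have hval : ∀ i, i ≤ n → toF w1 i = toF w2 i := by
    intro i h
    have := congrFun heq (⟨i, by omega⟩ : Fin (n+1))
    exact this
  apply List.ext_getElem?
  intro i
  by_cases h : i < n
  · rw [List.getElem?_eq_getElem (by omega : i < w1.length),
      List.getElem?_eq_getElem (by omega : i < w2.length)]
    have e1 : toF w1 (i+1) = toF w1 i + bval (w1[i]'(by omega)) := toF_succ w1 i (by omega)
    have e2 : toF w2 (i+1) = toF w2 i + bval (w2[i]'(by omega)) := toF_succ w2 i (by omega)
    have := hval (i+1) (by omega)
    have h0 := hval i (by omega)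
    have : bval (w1[i]'(by omega)) = bval (w2[i]'(by omega)) := by omega
    rw [bval_inj this]
  · rw [List.getElem?_eq_none (by omega), List.getElem?_eq_none (by omega)]

lemma ncard_phom (hd : 1 ≤ d) (n : ℕ) :
    Set.ncard {f : Fin (n+1) → ℤ | PHom n d f} = (Wn d n).card := by
  have hset : {f : Fin (n+1) → ℤ | PHom n d f} = ↑((Wn d n).image (listToFun n)) := by
    ext f
    simp only [Set.mem_setOf_eq, Finset.coe_image, Set.mem_image, Finset.mem_coe]
    constructor
    · intro hf
      obtain ⟨w, hw, hweq⟩ := word_of_phom d hd n f hf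
      exact ⟨w, hw, hweq⟩
    · rintro ⟨w, hw, rfl⟩
      exact phom_of_word d n w hw
  rw [hset, Set.ncard_coe_finset, Finset.card_image_of_injOn (inj_listToFun d n)]

end

open Filter

lemma renewal (d : ℕ) (hd : 1 ≤ d) (p q : ℝ) (hp : 0 < p) (hq : 0 < q) (hpq : p + q = 1)
    (a : ℕ → ℝ) (hpos : ∀ n, 0 < a n)
    (hrec : ∀ m : ℕ, a (m + (2*d+3)) = p * a (m + (2*d+1)) + q * a (m + 2)) :
    ∃ C : ℝ, 0 < C ∧ Tendsto a atTop (nhds C) := by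
  have hp1 : p < 1 := by linarith
  have hq1 : q < 1 := by linarith
  have hne : (Finset.range (2*d+1)).Nonempty := ⟨0, by simp⟩
  set M : ℕ → ℝ := fun k => (Finset.range (2*d+1)).sup' hne (fun i => a (k+i)) with hM
  set mm : ℕ → ℝ := fun k => (Finset.range (2*d+1)).inf' hne (fun i => a (k+i)) with hmm
  have hMge : ∀ k i, i < 2*d+1 → a (k+i) ≤ M k := by
    intro k i hi
    exact Finset.le_sup' (fun i => a (k+i)) (mem_range.mpr hi)
  have hmmle : ∀ k i, i < 2*d+1 → mm k ≤ a (k+i) := by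
    intro k i hi
    exact Finset.inf'_le (fun i => a (k+i)) (mem_range.mpr hi)
  have hmmM : ∀ k, mm k ≤ M k := fun k => le_trans (hmmle k 0 (by omega)) (hMge k 0 (by omega))
  have hmmpos : ∀ k, 0 < mm k := by
    intro k
    rw [hmm, Finset.lt_inf'_iff]
    exact fun i _ => hpos _
  -- upper bound
  have F3 : ∀ k j, a (k+2+j) ≤ M (k+2) := by
    intro k j
    induction j using Nat.strong_induction_on with
    | _ j ih =>
      by_cases hj : j < 2*d+1
      · exact hMge (k+2) j hj
      · obtain ⟨j', rfl⟩ : ∃ j', j = j' + (2*d+1) := ⟨j - (2*d+1), by omega⟩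
        have hidx : k+2+(j'+(2*d+1)) = (k+j') + (2*d+3) := by ring
        rw [hidx, hrec (k+j')]
        have h1 : a (k+j'+(2*d+1)) ≤ M (k+2) := by
          have he : k+j'+(2*d+1) = k+2+(j'+(2*d-1)) := by omega
          rw [he]; exact ih _ (by omega)
        have h2 : a (k+j'+2) ≤ M (k+2) := by
          have he : k+j'+2 = k+2+j' := by ring
          rw [he]; exact ih _ (by omega)
        have t1 := mul_le_mul_of_nonneg_left h1 hp.le
        have t2 := mul_le_mul_of_nonneg_left h2 hq.le
        have hsum : p * M (k+2) + q * M (k+2) = M (k+2) := by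
          rw [show q = 1-p by linarith]; ring
        linarith
  -- lower bound
  have F4 : ∀ k j, mm (k+2) ≤ a (k+2+j) := by
    intro k j
    induction j using Nat.strong_induction_on with
    | _ j ih =>
      by_cases hj : j < 2*d+1
      · exact hmmle (k+2) j hj
      · obtain ⟨j', rfl⟩ : ∃ j', j = j' + (2*d+1) := ⟨j - (2*d+1), by omega⟩
        have hidx : k+2+(j'+(2*d+1)) = (k+j') + (2*d+3) := by ring
        rw [hidx, hrec (k+j')]
        have h1 : mm (k+2) ≤ a (k+j'+(2*d+1)) := by
          have he : k+j'+(2*d+1) = k+2+(j'+(2*d-1)) := by omega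
          rw [he]; exact ih _ (by omega)
        have h2 : mm (k+2) ≤ a (k+j'+2) := by
          have he : k+j'+2 = k+2+j' := by ring
          rw [he]; exact ih _ (by omega)
        have t1 := mul_le_mul_of_nonneg_left h1 hp.le
        have t2 := mul_le_mul_of_nonneg_left h2 hq.le
        have hsum : p * mm (k+2) + q * mm (k+2) = mm (k+2) := by
          rw [show q = 1-p by linarith]; ring
        linarith
  have hMle : ∀ k j, M (k+2+j) ≤ M (k+2) := by
    intro k j
    apply Finset.sup'_le
    intro i hi
    have he : k+2+j+i = k+2+(j+i) := by ring
    rw [he]; exact F3 k (j+i)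
  have hmmLe : ∀ k j, mm (k+2) ≤ mm (k+2+j) := by
    intro k j
    apply Finset.le_inf'
    intro i hi
    have he : k+2+j+i = k+2+(j+i) := by ring
    rw [he]; exact F4 k (j+i)
  set δ : ℝ := q * p^(3*d+1) with hδ
  have hδ0 : 0 < δ := by positivity
  have hδ1 : δ < 1 := by
    have hpow : p^(3*d+1) ≤ 1 := pow_le_one₀ hp.le hp1.le
    nlinarith
  -- contraction
  have hcontr : ∀ k, M (k+2) - mm (k+2) ≥ 0 ∧
      M (k+2+(6*d+2)) - mm (k+2+(6*d+2)) ≤ (1-δ) * (M (k+2) - mm (k+2)) := by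
    intro k
    refine ⟨by linarith [hmmM (k+2)], ?_⟩
    -- pick the minimizing index in window k+2+2d
    obtain ⟨i0, hi0mem, hmin⟩ := Finset.exists_mem_eq_inf' hne (fun i => a (k+2+2*d+i))
    rw [mem_range] at hi0mem
    set j0 : ℕ := 2*d + i0 with hj0
    have hj0l : 2*d ≤ j0 := by omega
    have hj0u : j0 ≤ 4*d := by omega
    have haj0 : a (k+2+j0) = mm (k+2+2*d) := by
      have hq0 : mm (k+2+2*d) = a (k+2+2*d+i0) := hmin
      rw [hq0]
      congr 1
      omega
    set G : ℝ := M (k+2) - a (k+2+j0) with hG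
    have hGnn : 0 ≤ G := by
      have := F3 k j0
      rw [hG]; linarith
    -- Claim A: even chain
    have claimA : ∀ t, a (k+2+j0+2*t) ≤ M (k+2) - p^t * G := by
      intro t
      induction t with
      | zero => simp [hG]
      | succ t ih =>
        have hidx : k+2+j0+2*(t+1) = (k+i0+2*t+1) + (2*d+3) := by omega
        rw [hidx, hrec (k+i0+2*t+1)]
        have e1 : k+i0+2*t+1+(2*d+1) = k+2+j0+2*t := by omega
        have e2 : k+i0+2*t+1+2 = k+2+(i0+2*t+1) := by omega
        rw [e1, e2]
        have h2 : a (k+2+(i0+2*t+1)) ≤ M (k+2) := F3 k _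
        have hpt : 0 ≤ p^t * G := by positivity
        have hgoal : p * a (k+2+j0+2*t) + q * a (k+2+(i0+2*t+1))
            ≤ p * (M (k+2) - p^t * G) + q * M (k+2) := by
          have := mul_le_mul_of_nonneg_left ih hp.le
          have := mul_le_mul_of_nonneg_left h2 hq.le
          linarith
        calc p * a (k+2+j0+2*t) + q * a (k+2+(i0+2*t+1))
            ≤ p * (M (k+2) - p^t * G) + q * M (k+2) := hgoal
          _ = M (k+2) - p^(t+1) * G := by rw [show q = 1-p by linarith]; ring
    -- Claim B: odd chain
    have claimB : ∀ t, a (k+2+j0+2*t+(2*d+1)) ≤ M (k+2) - q * p^t * G := by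
      intro t
      have hidx : k+2+j0+2*t+(2*d+1) = (k+i0+2*t+2*d) + (2*d+3) := by omega
      rw [hidx, hrec (k+i0+2*t+2*d)]
      have e1 : k+i0+2*t+2*d+(2*d+1) = k+2+(i0+2*t+4*d-1) := by omega
      have e2 : k+i0+2*t+2*d+2 = k+2+j0+2*t := by omega
      rw [e1, e2]
      have h1 : a (k+2+(i0+2*t+4*d-1)) ≤ M (k+2) := F3 k _
      have h2 := claimA t
      have hgoal : p * a (k+2+(i0+2*t+4*d-1)) + q * a (k+2+j0+2*t)
          ≤ p * M (k+2) + q * (M (k+2) - p^t * G) := by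
        have := mul_le_mul_of_nonneg_left h1 hp.le
        have := mul_le_mul_of_nonneg_left h2 hq.le
        linarith
      calc p * a (k+2+(i0+2*t+4*d-1)) + q * a (k+2+j0+2*t)
          ≤ p * M (k+2) + q * (M (k+2) - p^t * G) := hgoal
        _ = M (k+2) - q * p^t * G := by rw [show q = 1-p by linarith]; ring
    -- window bound
    have hwb : ∀ r, r < 2*d+1 → a (k+2+(6*d+2)+r) ≤ M (k+2) - δ * G := by
      intro r hr
      have hple : ∀ t, t ≤ 3*d+1 → p^(3*d+1) ≤ p^t :=
        fun t ht => pow_le_pow_of_le_one hp.le hp1.le ht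
      rcases Nat.even_or_odd (6*d+2+r - j0) with ⟨t, ht⟩ | ⟨t, ht⟩
      · -- even offset : use claimA
        have hidx : k+2+(6*d+2)+r = k+2+j0+2*t := by omega
        rw [hidx]
        have := claimA t
        have htb : t ≤ 3*d+1 := by omega
        have h1 : p^(3*d+1) ≤ p^t := hple t htb
        have h2 : q * p^(3*d+1) * G ≤ p^t * G := by
          have ea : q * p^(3*d+1) ≤ p^(3*d+1) := by nlinarith [pow_pos hp (3*d+1)]
          exact mul_le_mul_of_nonneg_right (le_trans ea h1) hGnn
        rw [hδ]; linarith
      · -- odd offset : use claimB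
        have hidx : k+2+(6*d+2)+r = k+2+j0+2*((t - d)) + (2*d+1) := by omega
        rw [hidx]
        have := claimB (t - d)
        have htb : t - d ≤ 3*d+1 := by omega
        have h1 : p^(3*d+1) ≤ p^(t-d) := hple _ htb
        have h2 : q * p^(3*d+1) * G ≤ q * p^(t-d) * G :=
          mul_le_mul_of_nonneg_right (mul_le_mul_of_nonneg_left h1 hq.le) hGnn
        rw [hδ]; linarith
    have hA : M (k+2+(6*d+2)) ≤ M (k+2) - δ * G := by
      apply Finset.sup'_le
      intro i hi
      rw [mem_range] at hi
      exact hwb i hi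
    have hB : mm (k+2+2*d) ≤ mm (k+2+(6*d+2)) := by
      have := hmmLe (k+2*d) (4*d+2)
      rwa [show k+2*d+2 = k+2+2*d by ring,
        show k+2+2*d+(4*d+2) = k+2+(6*d+2) by ring] at this
    have hC : mm (k+2) ≤ mm (k+2+2*d) := hmmLe k (2*d)
    have hGdef : G = M (k+2) - mm (k+2+2*d) := by rw [hG, haj0]
    nlinarith [hδ0.le, hGnn]
  -- iterate the contraction
  set gap : ℕ → ℝ := fun k => M k - mm k with hgap
  have hgeo : ∀ t, gap (2 + t*(6*d+2)) ≤ (1-δ)^t * gap 2 := by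
    intro t
    induction t with
    | zero => simp
    | succ t ih =>
      have h1 := (hcontr (t*(6*d+2))).2
      have h0 := (hcontr (t*(6*d+2))).1
      have e1 : t*(6*d+2)+2 = 2+t*(6*d+2) := by ring
      have e2 : t*(6*d+2)+2+(6*d+2) = 2+(t+1)*(6*d+2) := by ring
      rw [e2] at h1
      rw [e1] at h1
      have h1' : gap (2+(t+1)*(6*d+2)) ≤ (1-δ) * gap (2+t*(6*d+2)) := h1
      have h2' : (1-δ) * gap (2+t*(6*d+2)) ≤ (1-δ) * ((1-δ)^t * gap 2) :=
        mul_le_mul_of_nonneg_left ih (by linarith)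
      calc gap (2+(t+1)*(6*d+2)) ≤ (1-δ) * gap (2+t*(6*d+2)) := h1'
        _ ≤ (1-δ) * ((1-δ)^t * gap 2) := h2'
        _ = (1-δ)^(t+1) * gap 2 := by ring
  -- Cauchy
  have hcauchy : CauchySeq a := by
    rw [Metric.cauchySeq_iff']
    intro ε hε
    obtain ⟨t, ht⟩ : ∃ t, (1-δ)^t * gap 2 < ε := by
      have h0 : Tendsto (fun t : ℕ => (1-δ)^t * gap 2) atTop (nhds (0 * gap 2)) := by
        apply Tendsto.mul_const
        exact tendsto_pow_atTop_nhds_zero_of_lt_one (by linarith) (by linarith)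
      rw [zero_mul] at h0
      have := (h0.eventually (eventually_lt_nhds hε)).exists
      exact this
    set N := 2 + t*(6*d+2) with hN
    refine ⟨N, fun n hn => ?_⟩
    obtain ⟨j, rfl⟩ : ∃ j, n = N + j := ⟨n - N, by omega⟩
    have hub : a (N + j) ≤ M N := by
      have := F3 (t*(6*d+2)) j
      have e : t*(6*d+2)+2 = N := by rw [hN]; ring
      rwa [e] at this
    have hlb : mm N ≤ a (N + j) := by
      have := F4 (t*(6*d+2)) j
      have e : t*(6*d+2)+2 = N := by rw [hN]; ring
      rwa [e] at this
    have hub2 : a N ≤ M N := by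
      have := hMge N 0 (by omega)
      simpa using this
    have hlb2 : mm N ≤ a N := by
      have := hmmle N 0 (by omega)
      simpa using this
    have hgapN : M N - mm N ≤ (1-δ)^t * gap 2 := hgeo t
    have ht' : (1-δ)^t * gap 2 < ε := ht
    rw [Real.dist_eq, abs_lt]
    constructor <;> linarith
  obtain ⟨C, hC⟩ := cauchySeq_tendsto_of_complete hcauchy
  refine ⟨C, ?_, hC⟩
  have hlow : ∀ᶠ n in atTop, mm 2 ≤ a n := by
    rw [eventually_atTop]
    refine ⟨2, fun n hn => ?_⟩
    obtain ⟨j, rfl⟩ : ∃ j, n = 2 + j := ⟨n - 2, by omega⟩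
    have := F4 0 j
    simpa using this
  have := ge_of_tendsto hC hlow
  linarith [hmmpos 2]


section
variable (d : ℕ)

lemma Nn_zero (hd : 1 ≤ d) : Set.ncard {f : Fin (0+1) → ℤ | PHom 0 d f} = 1 := by
  rw [ncard_phom d hd 0]
  simp [Wn]

lemma Nn_succ (hd : 1 ≤ d) (m : ℕ) :
    Set.ncard {f : Fin ((m+1)+1) → ℤ | PHom (m+1) d f} = 2 * cnt d m (2*d+1) := by
  rw [ncard_phom d hd (m+1), card_Wn]

lemma Nn_pos (hd : 1 ≤ d) (n : ℕ) : 0 < Set.ncard {f : Fin (n+1) → ℤ | PHom n d f} := by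
  match n with
  | 0 => rw [Nn_zero d hd]; omega
  | (m+1) => rw [Nn_succ d hd m]; have := cnt_pos d m (2*d+1); omega

lemma Nn_rec (hd : 1 ≤ d) (m : ℕ) :
    Set.ncard {f : Fin ((m+(2*d+3))+1) → ℤ | PHom (m+(2*d+3)) d f}
      = 2 * Set.ncard {f : Fin ((m+(2*d+1))+1) → ℤ | PHom (m+(2*d+1)) d f}
        + Set.ncard {f : Fin ((m+2)+1) → ℤ | PHom (m+2) d f} := by
  have e1 : m+(2*d+3) = (m+2*d+2)+1 := by ring
  have e2 : m+(2*d+1) = (m+2*d)+1 := by ring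
  have e3 : m+2 = (m+1)+1 := by ring
  rw [e1, e2, e3, Nn_succ d hd (m+2*d+2), Nn_succ d hd (m+2*d), Nn_succ d hd (m+1),
    cnt_main d hd m]
  ring

end

/-- Fix `d ≥ 1` and let `λ = λ(d)` be the unique positive solution of
`λ^(d−1/2)(λ−2) = 1`. Then there is a constant `C(d) > 0` such that
`|Hom(P_{n,d},0)| = C(d)·λ^(n/2)·(1+o(1))` as `n → ∞`. -/
theorem stmt14 (d : ℕ) (hd : 1 ≤ d) (l : ℝ) (hl : 0 < l)
    (hleq : l ^ ((d : ℝ) - 1 / 2) * (l - 2) = 1) :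
    ∃ C : ℝ, 0 < C ∧
      Tendsto (fun n : ℕ =>
          (Set.ncard {f : Fin (n + 1) → ℤ | PHom n d f} : ℝ) / l ^ ((n : ℝ) / 2))
        atTop (nhds C) := by
  -- l > 2
  have hl2 : 2 < l := by
    by_contra hle
    push_neg at hle
    have hpow : (0:ℝ) < l ^ ((d : ℝ) - 1/2) := Real.rpow_pos_of_pos hl _
    nlinarith
  set ν : ℝ := Real.sqrt l with hν
  have hν0 : 0 < ν := Real.sqrt_pos.mpr hl
  have hν2 : ν^2 = l := Real.sq_sqrt hl.le
  have hν1 : 1 < ν := by nlinarith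
  -- key identity
  have hrpow : ν = l ^ ((1:ℝ)/2) := Real.sqrt_eq_rpow l
  have hpow1 : ν^(2*d-1) = l ^ ((d:ℝ) - 1/2) := by
    rw [hrpow, ← Real.rpow_natCast (l ^ ((1:ℝ)/2)) (2*d-1), ← Real.rpow_mul hl.le]
    congr 1
    have : ((2*d-1 : ℕ) : ℝ) = 2*(d:ℝ) - 1 := by
      push_cast [Nat.cast_sub (by omega : 1 ≤ 2*d)]
      ring
    rw [this]
    ring
  have hkey1 : ν^(2*d-1) * (l - 2) = 1 := by rw [hpow1]; exact hleq
  have e4 : ν^2 * ν^(2*d-1) = ν^(2*d+1) := by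
    rw [← pow_add]
    congr 1
    omega
  have key : ν^(2*d+1) = 2*ν^(2*d-1) + 1 := by
    have e5 : ν^(2*d+1) = ν^(2*d-1) * l := by rw [← hν2, ← e4]; ring
    rw [e5]
    linear_combination hkey1
  -- parameters
  set p : ℝ := 2/ν^2 with hpdef
  set q : ℝ := 1/ν^(2*d+1) with hqdef
  have hν2pos : (0:ℝ) < ν^2 := by positivity
  have hν21pos : (0:ℝ) < ν^(2*d+1) := by positivity
  have hp : 0 < p := by positivity
  have hq : 0 < q := by positivity
  have hpq : p + q = 1 := by
    rw [hpdef, hqdef, div_add_div _ _ (ne_of_gt hν2pos) (ne_of_gt hν21pos),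
      div_eq_one_iff_eq (by positivity)]
    linear_combination (-(ν^2)) * key + (-2 : ℝ) * e4
  -- the sequence
  set a : ℕ → ℝ := fun n => (Set.ncard {f : Fin (n + 1) → ℤ | PHom n d f} : ℝ) / ν^n with ha
  have hapos : ∀ n, 0 < a n := by
    intro n
    have h1 := Nn_pos d hd n
    have : (0:ℝ) < (Set.ncard {f : Fin (n + 1) → ℤ | PHom n d f} : ℝ) := by
      exact_mod_cast h1
    positivity
  have harec : ∀ m : ℕ, a (m + (2*d+3)) = p * a (m + (2*d+1)) + q * a (m + 2) := by
    intro m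
    have hrecN := Nn_rec d hd m
    have hcast : (Set.ncard {f : Fin ((m+(2*d+3))+1) → ℤ | PHom (m+(2*d+3)) d f} : ℝ)
        = 2 * (Set.ncard {f : Fin ((m+(2*d+1))+1) → ℤ | PHom (m+(2*d+1)) d f} : ℝ)
          + (Set.ncard {f : Fin ((m+2)+1) → ℤ | PHom (m+2) d f} : ℝ) := by
      exact_mod_cast hrecN
    set A : ℝ := (Set.ncard {f : Fin ((m+(2*d+1))+1) → ℤ | PHom (m+(2*d+1)) d f} : ℝ)
    set B : ℝ := (Set.ncard {f : Fin ((m+2)+1) → ℤ | PHom (m+2) d f} : ℝ)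
    have E1 : ν^(m+(2*d+3)) = ν^m * ν^(2*d) * ν^3 := by
      rw [show m+(2*d+3) = (m+2*d)+3 by ring, pow_add, pow_add]
    have E2 : ν^(m+(2*d+1)) = ν^m * ν^(2*d) * ν := by
      rw [show m+(2*d+1) = (m+2*d)+1 by ring, pow_add, pow_add, pow_one]
    have E3 : ν^(m+2) = ν^m * ν^2 := pow_add ν m 2
    have E4 : ν^(2*d+1) = ν^(2*d) * ν := by rw [pow_add, pow_one]
    have hm0 : ν^m ≠ 0 := by positivity
    have hv0 : ν^(2*d) ≠ 0 := by positivity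
    have hne : ν ≠ 0 := ne_of_gt hν0
    show (Set.ncard {f : Fin ((m+(2*d+3))+1) → ℤ | PHom (m+(2*d+3)) d f} : ℝ) / ν^(m+(2*d+3))
      = p * (A / ν^(m+(2*d+1))) + q * (B / ν^(m+2))
    rw [hcast, E1, E2, E3, hpdef, hqdef, E4]
    field_simp
  obtain ⟨C, hC0, hCt⟩ := renewal d hd p q hp hq hpq a hapos harec
  refine ⟨C, hC0, ?_⟩
  have hfun : (fun n : ℕ =>
      (Set.ncard {f : Fin (n + 1) → ℤ | PHom n d f} : ℝ) / l ^ ((n : ℝ) / 2)) = a := by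
    funext n
    have : l ^ ((n : ℝ) / 2) = ν^n := by
      rw [hrpow, ← Real.rpow_natCast (l ^ ((1:ℝ)/2)) n, ← Real.rpow_mul hl.le]
      congr 1
      ring
    rw [this]
  rw [hfun]
  exact hCt
end

section
/- Let G be a finite, bipartite, connected graph with a distinguished vertex v₀, and let f be a uniformly chosen graph homomorphism from G to ℤ with f(v₀)=0. For any two increasing functions φ, ψ: ℤ^{V(G)} → ℝ we have E[φ(|f|)·ψ(|f|)] ≥ E[φ(|f|)]·E[ψ(|f|)], where |f| is the pointwise absolute value of f. -/
/-- The set of graph homomorphisms from a graph `G` to `ℤ` sending `v₀` to `0`. -/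
def ZHom {V : Type*} (G : SimpleGraph V) (v₀ : V) : Set (V → ℤ) :=
  {f | f v₀ = 0 ∧ ∀ x y : V, G.Adj x y → |f x - f y| = 1}

open SimpleGraph Finset

section Infra
variable {V : Type*} {G : SimpleGraph V} {v₀ : V}

/-- Generic induction along a walk. -/
lemma walk_ind {W : Type*} {H : SimpleGraph W} (P : W → Prop)
    (he : ∀ x y, H.Adj x y → P x → P y) {u v : W} (w : H.Walk u v) (hu : P u) : P v := by
  induction w with
  | nil => exact hu
  | cons h p ih => exact ih (he _ _ h hu)

lemma abs_mem_zhom {f : V → ℤ} (hf : f ∈ ZHom G v₀) : (fun v => |f v|) ∈ ZHom G v₀ := by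
  refine ⟨by simp [hf.1], fun x y hxy => ?_⟩
  have := hf.2 x y hxy
  simp only [Int.abs_eq_natAbs] at *; omega

lemma zhom_parity (hconn : G.Connected) {a b : V → ℤ} (ha : a ∈ ZHom G v₀)
    (hb : b ∈ ZHom G v₀) (v : V) : (2:ℤ) ∣ (a v - b v) := by
  obtain ⟨w⟩ := hconn.preconnected v₀ v
  refine walk_ind (fun v => (2:ℤ) ∣ (a v - b v)) (fun x y hxy hx => ?_) w (by simp [ha.1, hb.1])
  have h1 := ha.2 x y hxy
  have h2 := hb.2 x y hxy
  simp only [Int.abs_eq_natAbs] at *; omega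

lemma min_mem_zhom (hconn : G.Connected) {a b : V → ℤ} (ha : a ∈ ZHom G v₀)
    (hb : b ∈ ZHom G v₀) : (fun v => min (a v) (b v)) ∈ ZHom G v₀ := by
  refine ⟨by simp [ha.1, hb.1], fun x y hxy => ?_⟩
  have h1 := ha.2 x y hxy
  have h2 := hb.2 x y hxy
  have h3 := zhom_parity hconn ha hb x
  simp only [Int.abs_eq_natAbs] at *; omega

lemma max_mem_zhom (hconn : G.Connected) {a b : V → ℤ} (ha : a ∈ ZHom G v₀)
    (hb : b ∈ ZHom G v₀) : (fun v => max (a v) (b v)) ∈ ZHom G v₀ := by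
  refine ⟨by simp [ha.1, hb.1], fun x y hxy => ?_⟩
  have h1 := ha.2 x y hxy
  have h2 := hb.2 x y hxy
  have h3 := zhom_parity hconn ha hb x
  simp only [Int.abs_eq_natAbs] at *; omega

lemma zhom_abs_le_walk {f : V → ℤ} (hf : f ∈ ZHom G v₀) {u v : V} (w : G.Walk u v) :
    |f v| ≤ |f u| + w.length := by
  induction w with
  | nil => simp
  | @cons x y z h p ih =>
    have h1 := hf.2 x y h
    have h2 : (Walk.cons h p).length = p.length + 1 := Walk.length_cons h p
    rw [h2]
    have := ih
    simp only [Int.abs_eq_natAbs] at *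
    omega

lemma zhom_finite [Fintype V] (hconn : G.Connected) : (ZHom G v₀).Finite := by
  classical
  have hw : ∀ v : V, Nonempty (G.Walk v₀ v) := fun v => hconn.preconnected v₀ v
  have w : ∀ v : V, G.Walk v₀ v := fun v => (hw v).some
  have hsub : ZHom G v₀ ⊆ Set.univ.pi (fun v : V => Set.Icc (-((w v).length : ℤ)) (((w v).length : ℤ))) := by
    intro f hf
    rw [Set.mem_pi]
    intro v _
    have h := zhom_abs_le_walk hf (w v)
    rw [hf.1] at h
    simp only [Int.abs_eq_natAbs] at h
    simp only [Set.mem_Icc]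
    omega
  exact Set.Finite.subset (Set.Finite.pi (fun i => Set.finite_Icc _ _)) hsub

end Infra

section Inj
variable {V : Type*} (G : SimpleGraph V) {v₀ : V}

/-- Induced graph on the positivity set of `c`. -/
abbrev posG (c : V → ℤ) : SimpleGraph {v : V // 0 < c v} := G.induce {v | 0 < c v}

/-- A representative of the connected component (of the positivity graph of `c`)
containing `v`. -/
noncomputable def rep (c : V → ℤ) (v : V) (h : 0 < c v) : V :=
  (((posG G c).connectedComponentMk ⟨v, h⟩).out : {v : V // 0 < c v}).val

lemma rep_pos (c : V → ℤ) (v : V) (h : 0 < c v) : 0 < c (rep G c v h) :=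
  (((posG G c).connectedComponentMk ⟨v, h⟩).out).2

lemma rep_reachable (c : V → ℤ) (v : V) (h : 0 < c v) :
    (posG G c).Reachable ⟨rep G c v h, rep_pos G c v h⟩ ⟨v, h⟩ := by
  apply SimpleGraph.ConnectedComponent.exact
  exact ((posG G c).connectedComponentMk ⟨v, h⟩).out_eq

lemma rep_congr (c : V → ℤ) {v u : V} (hv : 0 < c v) (hu : 0 < c u)
    (h : (posG G c).connectedComponentMk ⟨v, hv⟩ = (posG G c).connectedComponentMk ⟨u, hu⟩) :
    rep G c v hv = rep G c u hu := by
  unfold rep; rw [h]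

lemma rep_self (c : V → ℤ) (v : V) (h : 0 < c v) :
    rep G c (rep G c v h) (rep_pos G c v h) = rep G c v h := by
  apply rep_congr
  have := ((posG G c).connectedComponentMk ⟨v, h⟩).out_eq
  exact this

/-- `±1` sign of an integer-valued function. -/
def sgn (f : V → ℤ) (v : V) : ℤ := if 0 < f v then 1 else -1

def mfun (f g : V → ℤ) : V → ℤ := fun v => min |f v| |g v|
def Mfun (f g : V → ℤ) : V → ℤ := fun v => max |f v| |g v|

/-- The coupling map: from a pair of homomorphisms `(f,g)` produce a pair `(F,G')`
with `|F| = |f| ⊓ |g|` and `|G'| = |f| ⊔ |g|`. -/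
noncomputable def ThetaAux (m M f g : V → ℤ) : (V → ℤ) × (V → ℤ) :=
  (fun v => if h : 0 < m v then
      sgn f (rep G m v h) * sgn g (rep G m v h) * m v else 0,
   fun v => if h : 0 < M v then
      (if 0 < |f (rep G M v h)| then sgn f (rep G M v h)
        else sgn g (rep G M v h)) * M v else 0)

noncomputable def Theta (f g : V → ℤ) : (V → ℤ) × (V → ℤ) :=
  ThetaAux G (mfun f g) (Mfun f g) f g

end Inj

section Inj2
variable {V : Type*} (G : SimpleGraph V) {v₀ : V}

lemma sgn_abs (f : V → ℤ) (v : V) : |sgn f v| = 1 := by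
  unfold sgn; split_ifs <;> simp

lemma sgn_reach {f c : V → ℤ} (hf : f ∈ ZHom G v₀) (hc : ∀ v, 0 < c v → f v ≠ 0)
    {x y : {v : V // 0 < c v}} (h : (posG G c).Reachable x y) :
    (0 < f x.val ↔ 0 < f y.val) := by
  obtain ⟨w⟩ := h
  refine walk_ind (fun z : {v : V // 0 < c v} => (0 < f x.val ↔ 0 < f z.val))
    (fun z₁ z₂ hadj hz => ?_) w Iff.rfl
  have hA : G.Adj z₁.val z₂.val := hadj
  have h1 := hf.2 z₁.val z₂.val hA
  have h2 := hc z₁.val z₁.2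
  have h3 := hc z₂.val z₂.2
  have hz' : 0 < f x.val ↔ 0 < f z₁.val := hz
  show 0 < f x.val ↔ 0 < f z₂.val
  simp only [Int.abs_eq_natAbs] at h1
  omega

lemma sgn_rep {f c : V → ℤ} (hf : f ∈ ZHom G v₀) (hc : ∀ v, 0 < c v → f v ≠ 0)
    (v : V) (h : 0 < c v) : sgn f (rep G c v h) = sgn f v := by
  have := sgn_reach G hf hc (rep_reachable G c v h)
  unfold sgn
  exact if_congr this rfl rfl

lemma mfun_nonneg (f g : V → ℤ) (v : V) : 0 ≤ mfun f g v :=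
  le_min (abs_nonneg _) (abs_nonneg _)

lemma Mfun_nonneg (f g : V → ℤ) (v : V) : 0 ≤ Mfun f g v :=
  le_trans (abs_nonneg _) (le_max_left _ _)

lemma mfun_mem (hconn : G.Connected) {f g : V → ℤ} (hf : f ∈ ZHom G v₀) (hg : g ∈ ZHom G v₀) :
    mfun f g ∈ ZHom G v₀ :=
  min_mem_zhom hconn (abs_mem_zhom hf) (abs_mem_zhom hg)

lemma Mfun_mem (hconn : G.Connected) {f g : V → ℤ} (hf : f ∈ ZHom G v₀) (hg : g ∈ ZHom G v₀) :
    Mfun f g ∈ ZHom G v₀ :=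
  max_mem_zhom hconn (abs_mem_zhom hf) (abs_mem_zhom hg)

lemma posG_adj {c : V → ℤ} {x y : V} (hxy : G.Adj x y) (hx : 0 < c x) (hy : 0 < c y) :
    (posG G c).Adj ⟨x, hx⟩ ⟨y, hy⟩ := hxy

/-- Generic: given `c` a nonneg hom and `σ` of absolute value one, constant on
components, the function `v ↦ σ v * c v` (0 outside) is a hom with abs `c`. -/
lemma theta_piece_mem {c : V → ℤ} (hc : c ∈ ZHom G v₀) (hc0 : ∀ v, 0 ≤ c v)
    (σ : (v : V) → 0 < c v → ℤ) (hσ : ∀ v h, |σ v h| = 1)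
    (hσc : ∀ x y (hx : 0 < c x) (hy : 0 < c y), G.Adj x y → σ x hx = σ y hy) :
    (fun v => if h : 0 < c v then σ v h * c v else 0) ∈ ZHom G v₀ ∧
      (∀ v, |if h : 0 < c v then σ v h * c v else 0| = c v) := by
  constructor
  · constructor
    · beta_reduce
      rw [dif_neg (by rw [hc.1]; omega)]
    · intro x y hxy
      have hcadj := hc.2 x y hxy
      beta_reduce
      by_cases hx : 0 < c x <;> by_cases hy : 0 < c y
      · rw [dif_pos hx, dif_pos hy, ← hσc x y hx hy hxy, ← mul_sub, abs_mul, hσ, one_mul]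
        exact hcadj
      · rw [dif_pos hx, dif_neg hy, sub_zero, abs_mul, hσ, one_mul]
        have := hc0 y
        simp only [Int.abs_eq_natAbs] at hcadj ⊢; omega
      · rw [dif_neg hx, dif_pos hy, zero_sub, abs_neg, abs_mul, hσ, one_mul]
        have := hc0 x
        simp only [Int.abs_eq_natAbs] at hcadj ⊢; omega
      · exfalso
        have h1 := hc0 x
        have h2 := hc0 y
        simp only [Int.abs_eq_natAbs] at hcadj; omega
  · intro v
    beta_reduce
    by_cases hv : 0 < c v
    · rw [dif_pos hv, abs_mul, hσ, one_mul, abs_of_nonneg (hc0 v)]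
    · rw [dif_neg hv]
      have := hc0 v
      simp only [Int.abs_eq_natAbs]; omega

lemma theta_fst_spec (hconn : G.Connected) {f g : V → ℤ} (hf : f ∈ ZHom G v₀)
    (hg : g ∈ ZHom G v₀) :
    (Theta G f g).1 ∈ ZHom G v₀ ∧ (∀ v, |(Theta G f g).1 v| = mfun f g v) := by
  have := theta_piece_mem G (mfun_mem G hconn hf hg) (mfun_nonneg f g)
    (σ := fun v h => sgn f (rep G (mfun f g) v h) * sgn g (rep G (mfun f g) v h))
    (fun v h => by beta_reduce; rw [abs_mul, sgn_abs, sgn_abs, one_mul])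
    (fun x y hx hy hxy => by
      have : rep G (mfun f g) x hx = rep G (mfun f g) y hy :=
        rep_congr G _ hx hy
          (SimpleGraph.ConnectedComponent.connectedComponentMk_eq_of_adj
            (posG_adj G hxy hx hy))
      beta_reduce
      rw [this])
  exact this

lemma theta_snd_spec (hconn : G.Connected) {f g : V → ℤ} (hf : f ∈ ZHom G v₀)
    (hg : g ∈ ZHom G v₀) :
    (Theta G f g).2 ∈ ZHom G v₀ ∧ (∀ v, |(Theta G f g).2 v| = Mfun f g v) := by
  have := theta_piece_mem G (Mfun_mem G hconn hf hg) (Mfun_nonneg f g)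
    (σ := fun v h => if 0 < |f (rep G (Mfun f g) v h)| then sgn f (rep G (Mfun f g) v h)
      else sgn g (rep G (Mfun f g) v h))
    (fun v h => by beta_reduce; split_ifs <;> rw [sgn_abs])
    (fun x y hx hy hxy => by
      have : rep G (Mfun f g) x hx = rep G (Mfun f g) y hy :=
        rep_congr G _ hx hy
          (SimpleGraph.ConnectedComponent.connectedComponentMk_eq_of_adj
            (posG_adj G hxy hx hy))
      beta_reduce
      rw [this])
  exact this

end Inj2

section Inj3
variable {V : Type*} (G : SimpleGraph V) {v₀ : V}

private lemma sgn_tie (p p' q q' : ℤ) (h1 : |p'| = |p|) (h2 : |q'| = |q|) (hp : p ≠ 0)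
    (hq : q ≠ 0)
    (h : (if 0 < p then (1:ℤ) else -1) * (if 0 < q then (1:ℤ) else -1) =
      (if 0 < p' then (1:ℤ) else -1) * (if 0 < q' then (1:ℤ) else -1)) :
    (p = p' ↔ q = q') := by
  simp only [Int.abs_eq_natAbs] at h1 h2
  split_ifs at h <;> omega

private lemma eq_of_sgn (p p' : ℤ) (h1 : |p'| = |p|) (hp : p ≠ 0)
    (h : (if 0 < p then (1:ℤ) else -1) = (if 0 < p' then (1:ℤ) else -1)) : p = p' := by
  simp only [Int.abs_eq_natAbs] at h1
  split_ifs at h <;> omega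

private lemma step_eq (p p' q q' : ℤ) (h1 : |p - q| = 1) (h2 : |p' - q'| = 1)
    (hpq : p = p') (habs : |q'| = |q|) (hp : p ≠ 0) (hq : q ≠ 0) : q = q' := by
  simp only [Int.abs_eq_natAbs] at *; omega

theorem theta_inj (hconn : G.Connected) {f g f' g' : V → ℤ} (hf : f ∈ ZHom G v₀)
    (hg : g ∈ ZHom G v₀) (hf' : f' ∈ ZHom G v₀) (hg' : g' ∈ ZHom G v₀)
    (ha : ∀ v, |f' v| = |f v|) (hb : ∀ v, |g' v| = |g v|)
    (hT : Theta G f g = Theta G f' g') : f = f' ∧ g = g' := by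
  have hm : mfun f' g' = mfun f g := funext fun v => by unfold mfun; rw [ha, hb]
  have hM : Mfun f' g' = Mfun f g := funext fun v => by unfold Mfun; rw [ha, hb]
  set m := mfun f g with hmdef
  set M := Mfun f g with hMdef
  rw [Theta, Theta, hm, hM] at hT
  -- nonvanishing facts
  have hfne : ∀ v, 0 < m v → f v ≠ 0 := by
    intro v h; have : m v ≤ |f v| := min_le_left _ _
    simp only [Int.abs_eq_natAbs] at this; omega
  have hgne : ∀ v, 0 < m v → g v ≠ 0 := by
    intro v h; have : m v ≤ |g v| := min_le_right _ _
    simp only [Int.abs_eq_natAbs] at this; omega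
  have hfne' : ∀ v, 0 < m v → f' v ≠ 0 := by
    intro v h; have h2 := hfne v h; have := ha v
    simp only [Int.abs_eq_natAbs] at this; omega
  have hgne' : ∀ v, 0 < m v → g' v ≠ 0 := by
    intro v h; have h2 := hgne v h; have := hb v
    simp only [Int.abs_eq_natAbs] at this; omega
  -- pointwise equality of sign products on the support of m
  have star : ∀ v, 0 < m v → sgn f v * sgn g v = sgn f' v * sgn g' v := by
    intro v h
    have h1 := congrFun (congrArg Prod.fst hT) v
    simp only [ThetaAux] at h1
    rw [dif_pos h, dif_pos h] at h1
    have h2 := mul_right_cancel₀ (by omega : m v ≠ 0) h1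
    rwa [sgn_rep G hf hfne, sgn_rep G hg hgne, sgn_rep G hf' hfne', sgn_rep G hg' hgne'] at h2
  have tie : ∀ v, 0 < m v → (f v = f' v ↔ g v = g' v) := by
    intro v h
    exact sgn_tie _ _ _ _ (ha v) (hb v) (hfne v h) (hgne v h) (star v h)
  -- the invariant
  set I : V → Prop := fun v => (0 < |f v| → f v = f' v) ∧ (0 < |g v| → g v = g' v) with hI
  have hmM : ∀ v, 0 < |f v| → 0 < |g v| → 0 < m v := by
    intro v h1 h2; exact lt_min h1 h2
  -- base case at the representative
  have base : ∀ v (hv : 0 < M v), I (rep G M v hv) := by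
    intro v hv
    have hr : 0 < M (rep G M v hv) := rep_pos G M v hv
    have h2 := congrFun (congrArg Prod.snd hT) (rep G M v hv)
    simp only [ThetaAux] at h2
    rw [dif_pos hr, dif_pos hr] at h2
    have h3 := mul_right_cancel₀ (by omega : M (rep G M v hv) ≠ 0) h2
    have hrr : rep G M (rep G M v hv) hr = rep G M v hv := rep_self G M v hv
    rw [hrr] at h3
    set r := rep G M v hv with hrdef
    rw [ha r] at h3
    by_cases hfr : 0 < |f r|
    · rw [if_pos hfr, if_pos hfr] at h3
      have hfeq : f r = f' r :=
        eq_of_sgn _ _ (ha r) (by simp only [Int.abs_eq_natAbs] at hfr; omega) h3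
      refine ⟨fun _ => hfeq, fun hgr => ?_⟩
      exact (tie r (hmM r hfr hgr)).mp hfeq
    · rw [if_neg hfr, if_neg hfr] at h3
      have hgr : 0 < |g r| := by
        have h6 : M r = |f r| ∨ M r = |g r| := max_choice _ _
        simp only [Int.abs_eq_natAbs] at hfr h6 ⊢
        omega
      have hgeq : g r = g' r :=
        eq_of_sgn _ _ (hb r) (by simp only [Int.abs_eq_natAbs] at hgr; omega) h3
      exact ⟨fun h => absurd h hfr, fun _ => hgeq⟩
  -- the step along an edge
  have step : ∀ x y : V, G.Adj x y → 0 < M x → 0 < M y → I x → I y := by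
    intro x y hxy hMx hMy hIx
    have hd : (0 < |f x| ∧ 0 < |f y|) ∨ (0 < |g x| ∧ 0 < |g y|) := by
      have h1 := (abs_mem_zhom hf).2 x y hxy
      have h2 := (abs_mem_zhom hg).2 x y hxy
      have h3 := zhom_parity hconn (abs_mem_zhom hf) (abs_mem_zhom hg) x
      have h4 : M x = |f x| ∨ M x = |g x| := max_choice _ _
      have h5 : M y = |f y| ∨ M y = |g y| := max_choice _ _
      have h6 : |f x| ≤ M x := le_max_left _ _
      have h7 : |g x| ≤ M x := le_max_right _ _
      have h8 : |f y| ≤ M y := le_max_left _ _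
      have h9 : |g y| ≤ M y := le_max_right _ _
      simp only [Int.abs_eq_natAbs] at h1 h2 h3 h4 h5 h6 h7 h8 h9 ⊢
      omega
    rcases hd with ⟨hfx, hfy⟩ | ⟨hgx, hgy⟩
    · have hfeqx : f x = f' x := hIx.1 hfx
      have hfeqy : f y = f' y :=
        step_eq _ _ _ _ (hf.2 x y hxy) (hf'.2 x y hxy) hfeqx (ha y)
          (by simp only [Int.abs_eq_natAbs] at hfx ⊢; omega)
          (by simp only [Int.abs_eq_natAbs] at hfy ⊢; omega)
      exact ⟨fun _ => hfeqy, fun hgy => (tie y (hmM y hfy hgy)).mp hfeqy⟩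
    · have hgeqx : g x = g' x := hIx.2 hgx
      have hgeqy : g y = g' y :=
        step_eq _ _ _ _ (hg.2 x y hxy) (hg'.2 x y hxy) hgeqx (hb y)
          (by simp only [Int.abs_eq_natAbs] at hgx ⊢; omega)
          (by simp only [Int.abs_eq_natAbs] at hgy ⊢; omega)
      exact ⟨fun hfy => (tie y (hmM y hfy hgy)).mpr hgeqy, fun _ => hgeqy⟩
  -- every vertex satisfies the invariant
  have main : ∀ v, I v := by
    intro v
    by_cases hv : 0 < M v
    · obtain ⟨w⟩ := rep_reachable G M v hv
      exact walk_ind (fun z : {u : V // 0 < M u} => I z.val)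
        (fun z₁ z₂ hadj h => step z₁.val z₂.val hadj z₁.2 z₂.2 h) w (base v hv)
    · have h8 : |f v| ≤ M v := le_max_left _ _
      have h9 : |g v| ≤ M v := le_max_right _ _
      constructor <;> intro hcon <;> exfalso <;>
        simp only [Int.abs_eq_natAbs] at hcon h8 h9 <;> omega
  constructor <;> funext v
  · by_cases h : 0 < |f v|
    · exact (main v).1 h
    · have := ha v; simp only [Int.abs_eq_natAbs] at *; omega
  · by_cases h : 0 < |g v|
    · exact (main v).2 h
    · have := hb v; simp only [Int.abs_eq_natAbs] at *; omega

end Inj3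

section Count
variable {V : Type*} [Fintype V] (G : SimpleGraph V) (v₀ : V)

/-- The fiber of homomorphisms with a prescribed absolute value. -/
noncomputable def Fib (Z : Finset (V → ℤ)) (c : V → ℤ) : Finset (V → ℤ) := by
  classical exact Z.filter (fun f => (fun v => |f v|) = c)

lemma mem_Fib {Z : Finset (V → ℤ)} {c f : V → ℤ} :
    f ∈ Fib Z c ↔ f ∈ Z ∧ (fun v => |f v|) = c := by
  unfold Fib
  exact Finset.mem_filter

/-- The FKG lattice condition for the fiber-counting measure. -/
lemma mu_key (hconn : G.Connected) (Zfin : Finset (V → ℤ))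
    (hZ : ∀ f, f ∈ Zfin ↔ f ∈ ZHom G v₀) (x y : V → ℤ) :
    (Fib Zfin x).card * (Fib Zfin y).card ≤
      (Fib Zfin (x ⊓ y)).card * (Fib Zfin (x ⊔ y)).card := by
  rw [← Finset.card_product, ← Finset.card_product]
  refine Finset.card_le_card_of_injOn (fun p => Theta G p.1 p.2) ?_ ?_
  · rintro ⟨f, g⟩ hp
    rw [Finset.mem_coe, Finset.mem_product] at hp; rw [Finset.mem_coe]
    obtain ⟨hp1, hp2⟩ := hp
    rw [mem_Fib] at hp1 hp2
    obtain ⟨hfZ, hfabs⟩ := hp1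
    obtain ⟨hgZ, hgabs⟩ := hp2
    have hf : f ∈ ZHom G v₀ := (hZ f).mp hfZ
    have hg : g ∈ ZHom G v₀ := (hZ g).mp hgZ
    have h1 := theta_fst_spec G hconn hf hg
    have h2 := theta_snd_spec G hconn hf hg
    show Theta G f g ∈ _ ×ˢ _
    rw [Finset.mem_product, mem_Fib, mem_Fib]
    refine ⟨⟨(hZ _).mpr h1.1, funext fun v => ?_⟩, ⟨(hZ _).mpr h2.1, funext fun v => ?_⟩⟩
    · rw [h1.2 v]
      show min |f v| |g v| = (x ⊓ y) v
      rw [Pi.inf_apply, ← hfabs, ← hgabs]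
    · rw [h2.2 v]
      show max |f v| |g v| = (x ⊔ y) v
      rw [Pi.sup_apply, ← hfabs, ← hgabs]
  · rintro ⟨f, g⟩ hp ⟨f', g'⟩ hq hT
    simp only [Finset.coe_product, Set.mem_prod, Finset.mem_coe, mem_Fib] at hp hq
    obtain ⟨⟨hfZ, hfabs⟩, ⟨hgZ, hgabs⟩⟩ := hp
    obtain ⟨⟨hfZ', hfabs'⟩, ⟨hgZ', hgabs'⟩⟩ := hq
    have h := theta_inj G hconn ((hZ f).mp hfZ) ((hZ g).mp hgZ) ((hZ f').mp hfZ')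
      ((hZ g').mp hgZ')
      (fun v => by rw [congrFun hfabs' v, congrFun hfabs v])
      (fun v => by rw [congrFun hgabs' v, congrFun hgabs v]) hT
    exact Prod.ext h.1 h.2

end Count

open FinsetFamily in
/-- (FKG inequality for absolute values.) Let `G` be a finite,
bipartite and connected graph, `v₀ ∈ V(G)` and `f` a uniformly chosen homomorphism in
`Hom(G,v₀)`. For any two increasing functions `φ, ψ : ℤ^V → ℝ`,
`E[φ(|f|)·ψ(|f|)] ≥ E[φ(|f|)]·E[ψ(|f|)]`, stated equivalently (multiplying through by
`|Hom(G,v₀)|²`) as below. -/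
theorem stmt16 {V : Type*} [Fintype V] (G : SimpleGraph V)
    (hconn : G.Connected) (hbip : G.Colorable 2) (v₀ : V)
    (φ ψ : (V → ℤ) → ℝ) (hφ : Monotone φ) (hψ : Monotone ψ) :
    (Set.ncard (ZHom G v₀) : ℝ) *
        ∑' f : ZHom G v₀, φ (fun v => |f.val v|) * ψ (fun v => |f.val v|) ≥
      (∑' f : ZHom G v₀, φ (fun v => |f.val v|)) *
        (∑' f : ZHom G v₀, ψ (fun v => |f.val v|)) := by
  classical
  have hZfin : (ZHom G v₀).Finite := zhom_finite hconn
  haveI : Fintype (ZHom G v₀) := hZfin.fintype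
  set Zfin := hZfin.toFinset with hZfinDef
  have hmemZ : ∀ f, f ∈ Zfin ↔ f ∈ ZHom G v₀ := fun f => hZfin.mem_toFinset
  have htsum : ∀ F : (V → ℤ) → ℝ, ∑' f : ZHom G v₀, F f.val = ∑ f ∈ Zfin, F f := by
    intro F
    rw [tsum_fintype]
    exact (Finset.sum_subtype Zfin hmemZ F).symm
  have e1 : ∑' f : ZHom G v₀, φ (fun v => |f.val v|) = ∑ f ∈ Zfin, φ (fun v => |f v|) :=
    htsum (fun g => φ (fun v => |g v|))
  have e2 : ∑' f : ZHom G v₀, ψ (fun v => |f.val v|) = ∑ f ∈ Zfin, ψ (fun v => |f v|) :=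
    htsum (fun g => ψ (fun v => |g v|))
  have e12 : ∑' f : ZHom G v₀, φ (fun v => |f.val v|) * ψ (fun v => |f.val v|) =
      ∑ f ∈ Zfin, φ (fun v => |f v|) * ψ (fun v => |f v|) :=
    htsum (fun g => φ (fun v => |g v|) * ψ (fun v => |g v|))
  have hN : (Set.ncard (ZHom G v₀) : ℝ) = (Zfin.card : ℝ) := by
    rw [Set.ncard_eq_toFinset_card (ZHom G v₀) hZfin]
  rw [e1, e2, e12, hN, ge_iff_le]
  -- regroup by the absolute value
  set s : Finset (V → ℤ) := Zfin.image (fun f => (fun v => |f v|)) with hsdef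
  set μ : (V → ℤ) → ℝ := fun x => ((Fib Zfin x).card : ℝ) with hμdef
  have hFib : ∀ x, Fib Zfin x = Zfin.filter (fun f => (fun v => |f v|) = x) := by
    intro x
    unfold Fib
    apply Finset.filter_congr_decidable
  have hregroup : ∀ F : (V → ℤ) → ℝ,
      ∑ f ∈ Zfin, F (fun v => |f v|) = ∑ x ∈ s, μ x * F x := by
    intro F
    refine (Finset.sum_comp (s := Zfin) F (fun f => (fun v => |f v|))).trans ?_
    refine Finset.sum_congr rfl fun x hx => ?_
    rw [nsmul_eq_mul]
    congr 1
  rw [hregroup (fun x => φ x * ψ x), hregroup φ, hregroup ψ]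
  have hcard : (Zfin.card : ℝ) = ∑ x ∈ s, μ x := by
    rw [Finset.card_eq_sum_card_image (fun f => (fun v => |f v|)) Zfin]
    push_cast
    refine Finset.sum_congr rfl fun x hx => ?_
    show _ = ((Fib Zfin x).card : ℝ)
    rw [hFib x]
  rw [hcard]
  have hμ0 : ∀ x, 0 ≤ μ x := fun x => Nat.cast_nonneg _
  have hμs : ∀ x, μ x ≠ 0 → x ∈ s := by
    intro x hx
    have hcne : (Fib Zfin x).card ≠ 0 := by
      intro h
      apply hx
      show ((Fib Zfin x).card : ℝ) = 0
      rw [h]; norm_num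
    obtain ⟨f, hf⟩ := Finset.card_pos.mp (Nat.pos_of_ne_zero hcne)
    rw [mem_Fib] at hf
    exact Finset.mem_image.mpr ⟨f, hf.1, hf.2⟩
  rcases Finset.eq_empty_or_nonempty s with hse | hne
  · simp [hse]
  -- shift the functions to be nonnegative on s
  set C : ℝ := s.sup' hne (fun x => -φ x) with hC
  set D : ℝ := s.sup' hne (fun x => -ψ x) with hD
  have hφC : ∀ x ∈ s, 0 ≤ φ x + C := by
    intro x hx
    have := Finset.le_sup' (fun x => -φ x) hx
    rw [← hC] at this
    linarith
  have hψD : ∀ x ∈ s, 0 ≤ ψ x + D := by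
    intro x hx
    have := Finset.le_sup' (fun x => -ψ x) hx
    rw [← hD] at this
    linarith
  have h₁ : ∀ x, 0 ≤ μ x * (φ x + C) := by
    intro x
    rcases eq_or_ne (μ x) 0 with h | h
    · rw [h, zero_mul]
    · exact mul_nonneg (hμ0 x) (hφC x (hμs x h))
  have h₂ : ∀ x, 0 ≤ μ x * (ψ x + D) := by
    intro x
    rcases eq_or_ne (μ x) 0 with h | h
    · rw [h, zero_mul]
    · exact mul_nonneg (hμ0 x) (hψD x (hμs x h))
  have h₄ : ∀ x, 0 ≤ μ x * ((φ x + C) * (ψ x + D)) := by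
    intro x
    rcases eq_or_ne (μ x) 0 with h | h
    · rw [h, zero_mul]
    · exact mul_nonneg (hμ0 x) (mul_nonneg (hφC x (hμs x h)) (hψD x (hμs x h)))
  have hcond : ∀ x y : V → ℤ, (μ x * (φ x + C)) * (μ y * (ψ y + D)) ≤
      μ (x ⊓ y) * (μ (x ⊔ y) * ((φ (x ⊔ y) + C) * (ψ (x ⊔ y) + D))) := by
    intro x y
    rcases eq_or_ne (μ x) 0 with hx | hx
    · rw [hx, zero_mul, zero_mul]
      exact mul_nonneg (hμ0 _) (h₄ _)
    rcases eq_or_ne (μ y) 0 with hy | hy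
    · rw [hy, zero_mul, mul_zero]
      exact mul_nonneg (hμ0 _) (h₄ _)
    have hkey : μ x * μ y ≤ μ (x ⊓ y) * μ (x ⊔ y) := by
      have h := mu_key G v₀ hconn Zfin hmemZ x y
      show ((Fib Zfin x).card : ℝ) * ((Fib Zfin y).card : ℝ) ≤
        ((Fib Zfin (x ⊓ y)).card : ℝ) * ((Fib Zfin (x ⊔ y)).card : ℝ)
      exact_mod_cast h
    have hμx : 0 < μ x := lt_of_le_of_ne (hμ0 x) (Ne.symm hx)
    have hμy : 0 < μ y := lt_of_le_of_ne (hμ0 y) (Ne.symm hy)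
    have hsup : x ⊔ y ∈ s := by
      apply hμs
      intro h0
      rw [h0, mul_zero] at hkey
      nlinarith
    have hφle : φ x + C ≤ φ (x ⊔ y) + C := by
      have := hφ (le_sup_left : x ≤ x ⊔ y); linarith
    have hψle : ψ y + D ≤ ψ (x ⊔ y) + D := by
      have := hψ (le_sup_right : y ≤ x ⊔ y); linarith
    have hφ0 : 0 ≤ φ x + C := hφC x (hμs x hx)
    have hψ0 : 0 ≤ ψ y + D := hψD y (hμs y hy)
    have hφ0' : 0 ≤ φ (x ⊔ y) + C := hφC _ hsup
    calc (μ x * (φ x + C)) * (μ y * (ψ y + D))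
        = (μ x * μ y) * ((φ x + C) * (ψ y + D)) := by ring
      _ ≤ (μ (x ⊓ y) * μ (x ⊔ y)) * ((φ (x ⊔ y) + C) * (ψ (x ⊔ y) + D)) := by
          refine mul_le_mul hkey (mul_le_mul hφle hψle hψ0 hφ0') ?_ ?_
          · exact mul_nonneg hφ0 hψ0
          · exact mul_nonneg (hμ0 _) (hμ0 _)
      _ = μ (x ⊓ y) * (μ (x ⊔ y) * ((φ (x ⊔ y) + C) * (ψ (x ⊔ y) + D))) := by ring
  have hfft := four_functions_theorem (fun x => μ x * (φ x + C)) (fun x => μ x * (ψ x + D))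
    μ (fun x => μ x * ((φ x + C) * (ψ x + D))) h₁ h₂ hμ0 h₄ hcond s s
  -- reduce the sums over s ⊼ s and s ⊻ s to sums over s
  have hsub1 : s ⊆ s ⊼ s := fun x hx => Finset.mem_infs.mpr ⟨x, hx, x, hx, inf_idem x⟩
  have hsub2 : s ⊆ s ⊻ s := fun x hx => Finset.mem_sups.mpr ⟨x, hx, x, hx, sup_idem x⟩
  have hμzero : ∀ x, x ∉ s → μ x = 0 := by
    intro x hx
    by_contra h
    exact hx (hμs x h)
  have e3 : ∑ x ∈ s ⊼ s, μ x = ∑ x ∈ s, μ x :=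
    (Finset.sum_subset hsub1 (fun x _ hxs => hμzero x hxs)).symm
  have e4 : ∑ x ∈ s ⊻ s, μ x * ((φ x + C) * (ψ x + D)) =
      ∑ x ∈ s, μ x * ((φ x + C) * (ψ x + D)) :=
    (Finset.sum_subset hsub2 (fun x _ hxs => by rw [hμzero x hxs, zero_mul])).symm
  rw [e3, e4] at hfft
  -- expand and finish
  have exp1 : ∑ x ∈ s, μ x * (φ x + C) =
      (∑ x ∈ s, μ x * φ x) + C * ∑ x ∈ s, μ x := by
    rw [Finset.mul_sum, ← Finset.sum_add_distrib]
    exact Finset.sum_congr rfl fun x _ => by ring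
  have exp2 : ∑ x ∈ s, μ x * (ψ x + D) =
      (∑ x ∈ s, μ x * ψ x) + D * ∑ x ∈ s, μ x := by
    rw [Finset.mul_sum, ← Finset.sum_add_distrib]
    exact Finset.sum_congr rfl fun x _ => by ring
  have exp4 : ∑ x ∈ s, μ x * ((φ x + C) * (ψ x + D)) =
      (∑ x ∈ s, μ x * (φ x * ψ x)) + D * (∑ x ∈ s, μ x * φ x) +
        C * (∑ x ∈ s, μ x * ψ x) + C * D * ∑ x ∈ s, μ x := by
    rw [Finset.mul_sum, Finset.mul_sum, Finset.mul_sum, ← Finset.sum_add_distrib,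
      ← Finset.sum_add_distrib, ← Finset.sum_add_distrib]
    exact Finset.sum_congr rfl fun x _ => by ring
  rw [exp1, exp2, exp4] at hfft
  nlinarith [hfft]
end
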